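/- arXiv:1302.3632 — 3 statements merged into one kernel-verified Lean document; each statement's English description precedes it below -/
import Mathlib

section
/- Suppose α > −1, γ > −1 and β ∈ ℝ. Then there exists a constant C > 0 such that for every integer n ≥ 2, the integral ∫₀¹ t^α (1−t)^{n+γ} (1+t)^{β−n} dt can be written as (2n)^{−α−1} Γ(α+1) (1 + ε_n) with |ε_n| ≤ C/n. In particular ∫₀¹ t^α (1−t)^{n+γ} (1+t)^{β−n} dt = (2n)^{−α−1} Γ(α+1) (1 + O(1/n)) as n → ∞. -/
open Real MeasureTheory

lemma beta_aux_eq {a b x : ℝ} (hx0 : 0 ≤ x) (hx1 : x ≤ 1) :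
    ((x:ℂ)) ^ ((a:ℂ)-1) * (1-(x:ℂ)) ^ ((b:ℂ)-1) = ((x ^ (a-1) * (1-x) ^ (b-1) : ℝ) : ℂ) := by
  rw [Complex.ofReal_mul, Complex.ofReal_cpow hx0, Complex.ofReal_cpow (by linarith : (0:ℝ) ≤ 1-x)]
  push_cast
  ring

lemma beta_integrable {a b : ℝ} (ha : 0 < a) (hb : 0 < b) :
    IntegrableOn (fun x : ℝ => x ^ (a-1) * (1-x) ^ (b-1)) (Set.Ioo (0:ℝ) 1) := by
  have h := Complex.betaIntegral_convergent (u := (a:ℂ)) (v := (b:ℂ)) (by simpa using ha) (by simpa using hb)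
  rw [intervalIntegrable_iff_integrableOn_Ioc_of_le (by norm_num)] at h
  have h2 := (h.mono_set Set.Ioo_subset_Ioc_self).re
  refine IntegrableOn.congr_fun h2 (fun x hx => ?_) measurableSet_Ioo
  obtain ⟨hx0, hx1⟩ := hx
  rw [beta_aux_eq hx0.le hx1.le]
  simp

lemma beta_eval {a b : ℝ} (ha : 0 < a) (hb : 0 < b) :
    ∫ x in Set.Ioo (0:ℝ) 1, x ^ (a-1) * (1-x) ^ (b-1)
      = Real.Gamma a * Real.Gamma b / Real.Gamma (a+b) := by
  have h := Complex.Gamma_mul_Gamma_eq_betaIntegral (s := (a:ℂ)) (t := (b:ℂ))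
    (by simpa using ha) (by simpa using hb)
  have hbeta : Complex.betaIntegral (a:ℂ) (b:ℂ)
      = ((∫ x in Set.Ioo (0:ℝ) 1, x ^ (a-1) * (1-x) ^ (b-1) : ℝ) : ℂ) := by
    rw [Complex.betaIntegral, intervalIntegral.integral_of_le (by norm_num : (0:ℝ) ≤ 1),
      MeasureTheory.integral_Ioc_eq_integral_Ioo]
    refine Eq.trans (setIntegral_congr_fun measurableSet_Ioo (fun x hx => ?_))
      (integral_ofReal (𝕜 := ℂ))
    exact beta_aux_eq hx.1.le hx.2.le
  rw [hbeta, Complex.Gamma_ofReal, Complex.Gamma_ofReal, ← Complex.ofReal_add,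
    Complex.Gamma_ofReal, ← Complex.ofReal_mul, ← Complex.ofReal_mul] at h
  have heq := Complex.ofReal_inj.mp h
  have hG : Real.Gamma (a+b) ≠ 0 := (Real.Gamma_pos_of_pos (by linarith)).ne'
  field_simp
  linarith [heq]

lemma subst_lemma (p q r : ℝ) :
    (∫ t in Set.Ioo (0:ℝ) 1, t ^ p * (1-t) ^ q * (1+t) ^ r)
      = 2 ^ (q+r+1) * ∫ u in Set.Ioo (0:ℝ) 1, u ^ p * (1-u) ^ q * (2-u) ^ (-(p+q+r)-2) := by
  have himg : Set.Ioo (0:ℝ) 1 = (fun u : ℝ => u / (2 - u)) '' Set.Ioo (0:ℝ) 1 := by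
    ext t
    constructor
    · rintro ⟨ht0, ht1⟩
      refine ⟨2*t/(1+t), ⟨by positivity, ?_⟩, ?_⟩
      · rw [div_lt_one (by linarith)]; linarith
      · have h1t : (1:ℝ) + t ≠ 0 := by linarith
        field_simp
        ring
    · rintro ⟨u, ⟨hu0, hu1⟩, rfl⟩
      have h2u : (0:ℝ) < 2 - u := by linarith
      constructor
      · positivity
      · rw [div_lt_one h2u]; linarith
  have hderiv : ∀ u ∈ Set.Ioo (0:ℝ) 1,
      HasDerivWithinAt (fun u : ℝ => u / (2 - u)) (2 / (2-u)^2) (Set.Ioo (0:ℝ) 1) u := by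
    intro u hu
    have h2u : (2:ℝ) - u ≠ 0 := by have := hu.2; intro h; linarith [hu.2]
    have := (hasDerivAt_id u).div ((hasDerivAt_const u (2:ℝ)).sub (hasDerivAt_id u)) h2u
    exact this.hasDerivWithinAt.congr_deriv (by simp only [Pi.sub_apply, id]; ring)
  have hinj : Set.InjOn (fun u : ℝ => u / (2 - u)) (Set.Ioo (0:ℝ) 1) := by
    intro u hu v hv h
    have h2u : (0:ℝ) < 2 - u := by linarith [hu.2]
    have h2v : (0:ℝ) < 2 - v := by linarith [hv.2]
    simp only at h
    rw [div_eq_div_iff h2u.ne' h2v.ne'] at h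
    nlinarith
  conv_lhs => rw [himg]
  rw [MeasureTheory.integral_image_eq_integral_abs_deriv_smul measurableSet_Ioo hderiv hinj,
    ← MeasureTheory.integral_const_mul]
  refine setIntegral_congr_fun measurableSet_Ioo (fun u hu => ?_)
  obtain ⟨hu0, hu1⟩ := hu
  have h2u : (0:ℝ) < 2 - u := by linarith
  have h1u : (0:ℝ) < 1 - u := by linarith
  have ht : (1:ℝ) - u / (2-u) = 2*(1-u)/(2-u) := by field_simp; ring
  have ht2 : (1:ℝ) + u / (2-u) = 2/(2-u) := by field_simp; ring
  show |2 / (2-u)^2| • ((u/(2-u)) ^ p * (1 - u/(2-u)) ^ q * (1 + u/(2-u)) ^ r)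
      = 2 ^ (q+r+1) * (u ^ p * (1-u) ^ q * (2-u) ^ (-(p+q+r)-2))
  rw [ht, ht2, abs_of_pos (by positivity), smul_eq_mul,
    Real.div_rpow hu0.le h2u.le, Real.div_rpow (by positivity) h2u.le,
    Real.div_rpow (by norm_num) h2u.le,
    Real.mul_rpow (by norm_num) h1u.le]
  rw [show -(p+q+r)-2 = -p + (-q + (-r + (-2:ℝ))) by ring,
    Real.rpow_add h2u, Real.rpow_add h2u, Real.rpow_add h2u,
    show q+r+1 = q + (r + 1) by ring,
    Real.rpow_add (by norm_num : (0:ℝ) < 2) q,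
    Real.rpow_add (by norm_num : (0:ℝ) < 2) r,
    Real.rpow_neg h2u.le p, Real.rpow_neg h2u.le q, Real.rpow_neg h2u.le r,
    Real.rpow_neg h2u.le 2, Real.rpow_one,
    show ((2:ℝ)) = ((2:ℕ):ℝ) by norm_num, Real.rpow_natCast]
  have hp : (2-u) ^ p ≠ 0 := by positivity
  have hq : (2-u) ^ q ≠ 0 := by positivity
  have hr : (2-u) ^ r ≠ 0 := by positivity
  have h2 : ((2:ℝ)-u)^(2:ℕ) ≠ 0 := by positivity
  field_simp

-- Gautschi-type bounds from log-convexity of Gamma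
lemma gautschi_upper {z s : ℝ} (hz : 0 < z) (hs0 : 0 ≤ s) (hs1 : s ≤ 1) :
    Real.Gamma (z + s) ≤ z ^ s * Real.Gamma z := by
  rcases eq_or_lt_of_le hs0 with h0 | h0
  · simp [← h0]
  rcases eq_or_lt_of_le hs1 with h1 | h1
  · rw [h1, Real.rpow_one, Real.Gamma_add_one hz.ne']
  have key := Real.Gamma_mul_add_mul_le_rpow_Gamma_mul_rpow_Gamma hz (by linarith : (0:ℝ) < z + 1)
    (by linarith : 0 < 1 - s) h0 (by ring)
  have : (1 - s) * z + s * (z + 1) = z + s := by ring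
  rw [this] at key
  calc Real.Gamma (z + s) ≤ Real.Gamma z ^ (1-s) * Real.Gamma (z+1) ^ s := key
    _ = z ^ s * Real.Gamma z := by
        rw [Real.Gamma_add_one hz.ne', Real.mul_rpow hz.le (Real.Gamma_pos_of_pos hz).le,
          ← mul_assoc, mul_comm (Real.Gamma z ^ (1-s)), mul_assoc,
          ← Real.rpow_add (Real.Gamma_pos_of_pos hz)]
        norm_num

lemma gautschi_lower {z s : ℝ} (hz : 0 < z) (hs0 : 0 ≤ s) (hs1 : s ≤ 1) :
    z * Real.Gamma z ≤ (z + s) ^ (1 - s) * Real.Gamma (z + s) := by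
  rcases eq_or_lt_of_le hs0 with h0 | h0
  · rw [← h0]
    rw [add_zero, sub_zero, Real.rpow_one]
  rcases eq_or_lt_of_le hs1 with h1 | h1
  · rw [h1]
    rw [sub_self, Real.rpow_zero, one_mul, Real.Gamma_add_one hz.ne']
  have hzs : (0:ℝ) < z + s := by linarith
  have key := Real.Gamma_mul_add_mul_le_rpow_Gamma_mul_rpow_Gamma hzs
    (by linarith : (0:ℝ) < z + s + 1) h0 (by linarith : 0 < 1 - s) (by ring)
  have : s * (z + s) + (1 - s) * (z + s + 1) = z + 1 := by ring
  rw [this] at key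
  have hGzs := Real.Gamma_pos_of_pos hzs
  calc z * Real.Gamma z = Real.Gamma (z + 1) := (Real.Gamma_add_one hz.ne').symm
    _ ≤ Real.Gamma (z+s) ^ s * Real.Gamma (z+s+1) ^ (1-s) := key
    _ = (z + s) ^ (1 - s) * Real.Gamma (z + s) := by
        rw [Real.Gamma_add_one hzs.ne', Real.mul_rpow hzs.le hGzs.le, ← mul_assoc,
          mul_comm (Real.Gamma (z+s) ^ s), mul_assoc, ← Real.rpow_add hGzs]
        norm_num

lemma Q_bound {e s : ℝ} (he : 0 < e) (hs0 : 0 ≤ s) (hs1 : s ≤ 1) (n : ℕ) (hn : 2 ≤ n) :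
    1 - 1/(n:ℝ) ≤ Real.Gamma ((n:ℝ)+e+s) / Real.Gamma ((n:ℝ)+e) / (n:ℝ)^s ∧
    Real.Gamma ((n:ℝ)+e+s) / Real.Gamma ((n:ℝ)+e) / (n:ℝ)^s ≤ 1 + e/(n:ℝ) := by
  have hnr : (2:ℝ) ≤ (n:ℝ) := by exact_mod_cast hn
  have hnr0 : (0:ℝ) < (n:ℝ) := by linarith
  set z : ℝ := (n:ℝ) + e with hz
  have hz0 : 0 < z := by positivity
  have hzs0 : 0 < z + s := by positivity
  have hG : 0 < Real.Gamma z := Real.Gamma_pos_of_pos hz0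
  have hGzs : 0 < Real.Gamma (z + s) := Real.Gamma_pos_of_pos hzs0
  constructor
  · -- lower bound
    have h1 : z * Real.Gamma z / (z+s)^(1-s) ≤ Real.Gamma (z+s) := by
      rw [div_le_iff₀ (by positivity)]
      calc z * Real.Gamma z ≤ (z+s)^(1-s) * Real.Gamma (z+s) := gautschi_lower hz0 hs0 hs1
        _ = Real.Gamma (z+s) * (z+s)^(1-s) := by ring
    have h2 : z * Real.Gamma z / (z+s)^(1-s) / Real.Gamma z / (n:ℝ)^s
        = z / ((z+s)^(1-s) * (n:ℝ)^s) := by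
      field_simp
    have h3 : (z+s)^(1-s) * (n:ℝ)^s ≤ z + s := by
      calc (z+s)^(1-s) * (n:ℝ)^s ≤ (z+s)^(1-s) * (z+s)^s :=
            mul_le_mul_of_nonneg_left
              (Real.rpow_le_rpow hnr0.le (by simp only [hz]; linarith) hs0)
              (Real.rpow_nonneg hzs0.le _)
        _ = (z+s) ^ ((1-s)+s) := (Real.rpow_add hzs0 _ _).symm
        _ = z + s := by norm_num
    have h4 : 1 - 1/(n:ℝ) ≤ z / (z+s) := by
      rw [le_div_iff₀ hzs0]
      have hsn : s * (n:ℝ) ≤ z + s := by nlinarith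
      have : (1 - 1/(n:ℝ)) * (z+s) = (z+s) - (z+s)/(n:ℝ) := by ring
      rw [this, sub_le_iff_le_add]
      have hs' : s ≤ (z+s)/(n:ℝ) := (le_div_iff₀ hnr0).mpr hsn
      linarith
    calc 1 - 1/(n:ℝ) ≤ z / (z+s) := h4
      _ ≤ z / ((z+s)^(1-s) * (n:ℝ)^s) := by
          gcongr
      _ = z * Real.Gamma z / (z+s)^(1-s) / Real.Gamma z / (n:ℝ)^s := h2.symm
      _ ≤ Real.Gamma (z+s) / Real.Gamma z / (n:ℝ)^s := by gcongr
  · -- upper bound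
    have h1 : Real.Gamma (z+s) / Real.Gamma z / (n:ℝ)^s ≤ z^s / (n:ℝ)^s := by
      rw [div_div]
      rw [div_le_div_iff₀ (by positivity) (by positivity)]
      calc Real.Gamma (z+s) * (n:ℝ)^s ≤ (z^s * Real.Gamma z) * (n:ℝ)^s := by
            gcongr; exact gautschi_upper hz0 hs0 hs1
        _ = z^s * (Real.Gamma z * (n:ℝ)^s) := by ring
    have h2 : z^s / (n:ℝ)^s = (z/(n:ℝ))^s := (Real.div_rpow hz0.le hnr0.le s).symm
    have h3 : (z/(n:ℝ))^s ≤ z/(n:ℝ) := by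
      have hzn1 : 1 ≤ z/(n:ℝ) := by rw [le_div_iff₀ hnr0]; simp [hz]; linarith
      calc (z/(n:ℝ))^s ≤ (z/(n:ℝ))^(1:ℝ) :=
            Real.rpow_le_rpow_of_exponent_le hzn1 hs1
        _ = z/(n:ℝ) := Real.rpow_one _
    have h4 : z/(n:ℝ) = 1 + e/(n:ℝ) := by field_simp; exact hz
    linarith [h1, h2 ▸ h3]

lemma near_one_mul {A B ea eb : ℝ} (hA : |A - 1| ≤ ea) (hB : |B - 1| ≤ eb) :
    |A * B - 1| ≤ ea + eb + ea * eb := by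
  have h0a := abs_nonneg (A - 1)
  have h0b := abs_nonneg (B - 1)
  have key : A * B - 1 = (A - 1) + (B - 1) + (A - 1) * (B - 1) := by ring
  rw [key]
  calc |(A - 1) + (B - 1) + (A - 1) * (B - 1)|
      ≤ |(A - 1) + (B - 1)| + |(A - 1) * (B - 1)| := abs_add_le _ _
    _ ≤ (|A - 1| + |B - 1|) + |A - 1| * |B - 1| := by
        rw [abs_mul]; gcongr; exact abs_add_le _ _
    _ ≤ (ea + eb) + ea * eb := by gcongr ((?_ + ?_) + ?_) <;> first
        | exact hA | exact hB | exact mul_le_mul hA hB h0b (le_trans h0a hA)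
    _ = ea + eb + ea * eb := by ring

lemma P_bound {e : ℝ} (he : 0 < e) (m : ℕ) : ∃ K : ℝ, 0 ≤ K ∧ ∀ n : ℕ, 2 ≤ n →
    1 ≤ Real.Gamma ((n:ℝ)+e+m) / Real.Gamma ((n:ℝ)+e) / (n:ℝ)^m ∧
    Real.Gamma ((n:ℝ)+e+m) / Real.Gamma ((n:ℝ)+e) / (n:ℝ)^m ≤ 1 + K/(n:ℝ) := by
  induction m with
  | zero =>
    refine ⟨0, le_refl 0, fun n hn => ?_⟩
    have hnr0 : (0:ℝ) < (n:ℝ) := by positivity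
    have hG : 0 < Real.Gamma ((n:ℝ)+e) := Real.Gamma_pos_of_pos (by positivity)
    simp [div_self hG.ne']
  | succ m ih =>
    obtain ⟨K, hK0, hK⟩ := ih
    refine ⟨K + (e + m) + K * (e + m), by positivity, fun n hn => ?_⟩
    have hnr : (2:ℝ) ≤ (n:ℝ) := by exact_mod_cast hn
    have hnr0 : (0:ℝ) < (n:ℝ) := by linarith
    have hG : 0 < Real.Gamma ((n:ℝ)+e) := Real.Gamma_pos_of_pos (by positivity)
    have hGm : 0 < Real.Gamma ((n:ℝ)+e+m) := Real.Gamma_pos_of_pos (by positivity)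
    have hnem : (0:ℝ) < (n:ℝ)+e+m := by positivity
    have hsplit : Real.Gamma ((n:ℝ)+e+(m+1:ℕ)) / Real.Gamma ((n:ℝ)+e) / (n:ℝ)^(m+1:ℕ)
        = (((n:ℝ)+e+m)/(n:ℝ)) * (Real.Gamma ((n:ℝ)+e+m) / Real.Gamma ((n:ℝ)+e) / (n:ℝ)^m) := by
      have : ((n:ℝ)+e+(m+1:ℕ)) = ((n:ℝ)+e+m) + 1 := by push_cast; ring
      rw [this, Real.Gamma_add_one hnem.ne', pow_succ]
      field_simp
    obtain ⟨hlo, hhi⟩ := hK n hn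
    have hfac1 : 1 ≤ ((n:ℝ)+e+m)/(n:ℝ) := by
      rw [le_div_iff₀ hnr0]
      have hm : (0:ℝ) ≤ (m:ℝ) := Nat.cast_nonneg m
      nlinarith
    constructor
    · rw [hsplit]; nlinarith
    · rw [hsplit]
      have hfac2 : ((n:ℝ)+e+m)/(n:ℝ) = 1 + (e+m)/(n:ℝ) := by field_simp; ring
      rw [hfac2]
      have h1n : 1/(n:ℝ) ≤ 1 := by rw [div_le_one hnr0]; linarith
      have hKn : 0 ≤ K/(n:ℝ) := by positivity
      have hem : 0 ≤ (e+m)/(n:ℝ) := by positivity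
      have : (1 + (e+m)/(n:ℝ)) * (1 + K/(n:ℝ))
          = 1 + (e+m)/(n:ℝ) + K/(n:ℝ) + ((e+m)*K/(n:ℝ)) * (1/(n:ℝ)) := by
        field_simp; ring
      calc (1 + (e+m)/(n:ℝ)) * (Real.Gamma ((n:ℝ)+e+m) / Real.Gamma ((n:ℝ)+e) / (n:ℝ)^m)
          ≤ (1 + (e+m)/(n:ℝ)) * (1 + K/(n:ℝ)) := by gcongr
        _ = 1 + (e+m)/(n:ℝ) + K/(n:ℝ) + ((e+m)*K/(n:ℝ)) * (1/(n:ℝ)) := this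
        _ ≤ 1 + (e+m)/(n:ℝ) + K/(n:ℝ) + ((e+m)*K/(n:ℝ)) * 1 := by
            gcongr
        _ = 1 + (K + (e + m) + K * (e + m))/(n:ℝ) := by field_simp; ring

lemma ratio_bound {d a : ℝ} (hd : 0 < d) (ha : 0 < a) :
    ∃ K : ℝ, 0 ≤ K ∧ ∀ n : ℕ, 2 ≤ n →
      1/2 ≤ Real.Gamma ((n:ℝ)+d+a) / Real.Gamma ((n:ℝ)+d) / (n:ℝ)^a ∧
      |Real.Gamma ((n:ℝ)+d+a) / Real.Gamma ((n:ℝ)+d) / (n:ℝ)^a - 1| ≤ K/(n:ℝ) := by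
  set m : ℕ := ⌊a⌋₊ with hm
  set s : ℝ := a - m with hs
  have hs0 : 0 ≤ s := by
    have := Nat.floor_le ha.le
    simp only [hs]; linarith
  have hs1 : s ≤ 1 := by
    have := Nat.lt_floor_add_one a
    simp only [hs]; linarith
  obtain ⟨K, hK0, hK⟩ := P_bound hd m
  refine ⟨(d+m+1) + K + (d+m+1)*K, by positivity, fun n hn => ?_⟩
  have hnr : (2:ℝ) ≤ (n:ℝ) := by exact_mod_cast hn
  have hnr0 : (0:ℝ) < (n:ℝ) := by linarith
  have hG : 0 < Real.Gamma ((n:ℝ)+d) := Real.Gamma_pos_of_pos (by positivity)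
  have hGm : 0 < Real.Gamma ((n:ℝ)+d+m) := Real.Gamma_pos_of_pos (by positivity)
  obtain ⟨hQlo, hQhi⟩ := Q_bound (by positivity : (0:ℝ) < d + m) hs0 hs1 n hn
  obtain ⟨hPlo, hPhi⟩ := hK n hn
  have hQP : Real.Gamma ((n:ℝ)+d+a) / Real.Gamma ((n:ℝ)+d) / (n:ℝ)^a
      = (Real.Gamma ((n:ℝ)+(d+m)+s) / Real.Gamma ((n:ℝ)+(d+m)) / (n:ℝ)^s)
        * (Real.Gamma ((n:ℝ)+d+m) / Real.Gamma ((n:ℝ)+d) / (n:ℝ)^m) := by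
    have h1 : (n:ℝ)+(d+m)+s = (n:ℝ)+d+a := by simp only [hs]; ring
    have h2 : (n:ℝ)+(d+m) = (n:ℝ)+d+m := by ring
    have h3 : (n:ℝ)^a = (n:ℝ)^(m:ℕ) * (n:ℝ)^s := by
      rw [← Real.rpow_natCast (n:ℝ) m, ← Real.rpow_add hnr0]
      congr 1
      simp only [hs]; ring
    rw [h1, h2, h3]
    have hpm : ((n:ℝ):ℝ)^(m:ℕ) ≠ 0 := by positivity
    have hps : (n:ℝ)^s ≠ 0 := by positivity
    field_simp
  have hQ1 : |Real.Gamma ((n:ℝ)+(d+m)+s) / Real.Gamma ((n:ℝ)+(d+m)) / (n:ℝ)^s - 1|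
      ≤ (d+m+1)/(n:ℝ) := by
    rw [abs_le]
    constructor
    · have : (1:ℝ)/(n:ℝ) ≤ (d+m+1)/(n:ℝ) := by
        rw [div_le_div_iff₀ hnr0 hnr0]
        nlinarith [Nat.cast_nonneg (α := ℝ) m]
      linarith
    · have : (d+m)/(n:ℝ) ≤ (d+m+1)/(n:ℝ) := by
        rw [div_le_div_iff₀ hnr0 hnr0]
        nlinarith [Nat.cast_nonneg (α := ℝ) m]
      linarith
  have hP1 : |Real.Gamma ((n:ℝ)+d+m) / Real.Gamma ((n:ℝ)+d) / (n:ℝ)^m - 1| ≤ K/(n:ℝ) := by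
    rw [abs_le]
    constructor
    · have : (0:ℝ) ≤ K/(n:ℝ) := by positivity
      linarith
    · linarith
  constructor
  · rw [hQP]
    have h1n : 1/(n:ℝ) ≤ 1/2 := by
      rw [div_le_div_iff₀ hnr0 (by norm_num)]; linarith
    nlinarith
  · rw [hQP]
    have := near_one_mul hQ1 hP1
    have hmul : (d+m+1)/(n:ℝ) * (K/(n:ℝ)) ≤ ((d+m+1)*K)/(n:ℝ) := by
      have h1n : 1/(n:ℝ) ≤ 1 := by rw [div_le_one hnr0]; linarith
      have heq : (d+m+1)/(n:ℝ) * (K/(n:ℝ)) = ((d+m+1)*K/(n:ℝ)) * (1/(n:ℝ)) := by ring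
      rw [heq]
      have hnn : (0:ℝ) ≤ (d+m+1)*K/(n:ℝ) := by positivity
      calc ((d+m+1)*K/(n:ℝ)) * (1/(n:ℝ)) ≤ ((d+m+1)*K/(n:ℝ)) * 1 :=
            mul_le_mul_of_nonneg_left h1n hnn
        _ = ((d+m+1)*K)/(n:ℝ) := by ring
    calc |_ - 1| ≤ (d+m+1)/(n:ℝ) + K/(n:ℝ) + (d+m+1)/(n:ℝ) * (K/(n:ℝ)) := this
      _ ≤ (d+m+1)/(n:ℝ) + K/(n:ℝ) + ((d+m+1)*K)/(n:ℝ) := by linarith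
      _ = ((d+m+1) + K + (d+m+1)*K)/(n:ℝ) := by field_simp

lemma two_sub_rpow_le (c : ℝ) {u : ℝ} (h0 : 0 ≤ u) (h1 : u ≤ 1) :
    (2-u) ^ (-c) ≤ 2 ^ |c| := by
  have h2u : (1:ℝ) ≤ 2 - u := by linarith
  rcases le_or_gt 0 (-c) with h | h
  · calc (2-u) ^ (-c) ≤ 2 ^ (-c) := Real.rpow_le_rpow (by linarith) (by linarith) h
      _ ≤ 2 ^ |c| := Real.rpow_le_rpow_of_exponent_le (by norm_num) (neg_le_abs c)
  · calc (2-u) ^ (-c) ≤ 1 := Real.rpow_le_one_of_one_le_of_nonpos h2u h.le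
      _ ≤ 2 ^ |c| := Real.one_le_rpow (by norm_num) (abs_nonneg c)

lemma lip_bound (c : ℝ) : ∃ L : ℝ, 0 ≤ L ∧ ∀ u ∈ Set.Icc (0:ℝ) 1,
    |(2-u) ^ (-c) - 2 ^ (-c)| ≤ L * u := by
  refine ⟨|c| * 2 ^ |c+1|, by positivity, fun u hu => ?_⟩
  obtain ⟨h0, h1⟩ := hu
  have hderiv : ∀ x ∈ Set.Icc (0:ℝ) 1,
      HasDerivWithinAt (fun x : ℝ => (2-x) ^ (-c)) (c * (2-x) ^ (-c-1)) (Set.Icc 0 1) x := by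
    intro x hx
    have h2x : (0:ℝ) < 2 - x := by linarith [hx.2]
    have hg : HasDerivAt (fun x : ℝ => 2 - x) (-1) x := by
      simpa using (hasDerivAt_id x).const_sub (2:ℝ)
    have hf := Real.hasDerivAt_rpow_const (x := 2 - x) (p := -c) (Or.inl h2x.ne')
    have := HasDerivAt.comp x hf hg
    exact this.hasDerivWithinAt.congr_deriv (by ring)
  have hbound : ∀ x ∈ Set.Icc (0:ℝ) 1, ‖c * (2-x) ^ (-c-1)‖ ≤ |c| * 2 ^ |c+1| := by
    intro x hx
    rw [norm_mul, Real.norm_eq_abs, Real.norm_eq_abs]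
    have h2x : (0:ℝ) < 2 - x := by linarith [hx.2]
    have : |(2-x) ^ (-c-1)| = (2-x) ^ (-c-1) := abs_of_nonneg (Real.rpow_nonneg h2x.le _)
    rw [this]
    have : (2-x) ^ (-c-1) ≤ 2 ^ |c+1| := by
      have := two_sub_rpow_le (c+1) hx.1 hx.2
      rw [show -(c+1) = -c-1 by ring] at this
      exact this
    exact mul_le_mul_of_nonneg_left this (abs_nonneg c)
  have key := (convex_Icc (0:ℝ) 1).norm_image_sub_le_of_norm_hasDerivWithin_le
    hderiv hbound (Set.mem_Icc.mpr ⟨le_refl 0, by norm_num⟩) (Set.mem_Icc.mpr ⟨h0, h1⟩)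
  simpa [abs_of_nonneg h0] using key

lemma integrable_weighted {p q : ℝ} (hp : -1 < p) (hq : -1 < q) {h : ℝ → ℝ} {M : ℝ}
    (hcont : ContinuousOn h (Set.Ioo 0 1)) (hM : ∀ u ∈ Set.Ioo (0:ℝ) 1, |h u| ≤ M) :
    IntegrableOn (fun u : ℝ => u ^ p * (1-u) ^ q * h u) (Set.Ioo (0:ℝ) 1) := by
  have hbase := beta_integrable (a := p+1) (b := q+1) (by linarith) (by linarith)
  simp only [add_sub_cancel_right] at hbase
  have hg : IntegrableOn (fun u : ℝ => M * (u ^ p * (1-u) ^ q)) (Set.Ioo (0:ℝ) 1) :=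
    hbase.const_mul M
  have c1 : ContinuousOn (fun u : ℝ => u ^ p) (Set.Ioo (0:ℝ) 1) :=
    ContinuousOn.rpow_const continuousOn_id (fun x hx => Or.inl (ne_of_gt hx.1))
  have c2 : ContinuousOn (fun u : ℝ => (1-u) ^ q) (Set.Ioo (0:ℝ) 1) :=
    ContinuousOn.rpow_const (continuous_const.sub continuous_id).continuousOn
      (fun x hx => Or.inl (by have := hx.2; intro hcon; have : (1:ℝ) - x = 0 := hcon; linarith))
  have fc : ContinuousOn (fun u : ℝ => u ^ p * (1-u) ^ q * h u) (Set.Ioo (0:ℝ) 1) :=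
    (c1.mul c2).mul hcont
  refine Integrable.mono hg (fc.aestronglyMeasurable measurableSet_Ioo) ?_
  rw [ae_restrict_iff' measurableSet_Ioo]
  refine ae_of_all _ (fun x hx => ?_)
  obtain ⟨hx0, hx1⟩ := hx
  have h1x : (0:ℝ) < 1 - x := by linarith
  have hMx := hM x ⟨hx0, hx1⟩
  rw [Real.norm_eq_abs, Real.norm_eq_abs, abs_mul, abs_mul,
    abs_of_nonneg (Real.rpow_nonneg hx0.le p), abs_of_nonneg (Real.rpow_nonneg h1x.le q)]
  calc x ^ p * (1-x) ^ q * |h x| ≤ x ^ p * (1-x) ^ q * M := by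
        gcongr
    _ ≤ |M * (x ^ p * (1-x) ^ q)| := by
        rw [show x ^ p * (1-x) ^ q * M = M * (x ^ p * (1-x) ^ q) by ring]
        exact le_abs_self _

/-- For α > −1, γ > −1, β ∈ ℝ, there exists C > 0 such that for every n ≥ 2,
∫₀¹ t^α (1−t)^{n+γ} (1+t)^{β−n} dt = (2n)^{−α−1} Γ(α+1) (1 + ε) with |ε| ≤ C/n. -/
theorem statement0 (α γ β : ℝ) (hα : α > -1) (hγ : γ > -1) :
    ∃ C : ℝ, C > 0 ∧ ∀ n : ℕ, 2 ≤ n → ∃ ε : ℝ,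
      (∫ t in Set.Ioo (0:ℝ) 1, t ^ α * (1 - t) ^ ((n : ℝ) + γ) * (1 + t) ^ (β - (n : ℝ)))
        = (2 * (n : ℝ)) ^ (-α - 1) * Real.Gamma (α + 1) * (1 + ε)
      ∧ |ε| ≤ C / (n : ℝ) := by
  have hα1 : (0:ℝ) < α + 1 := by linarith
  obtain ⟨L, hL0, hLip⟩ := lip_bound (α+γ+β+2)
  obtain ⟨K, hK0, hKb⟩ := ratio_bound (d := γ+1) (a := α+1) (by linarith) hα1
  set Cδ : ℝ := 2 ^ (α+γ+β+2) * L * (α+1) with hCδdef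
  have hCδ0 : 0 ≤ Cδ := by positivity
  refine ⟨2*K + Cδ + 2*K*Cδ + 1, by positivity, fun n hn => ?_⟩
  have hnr : (2:ℝ) ≤ (n:ℝ) := by exact_mod_cast hn
  have hnr0 : (0:ℝ) < (n:ℝ) := by linarith
  set nr : ℝ := (n:ℝ) with hnrdef
  have hq : (-1:ℝ) < nr + γ := by linarith
  -- substitution
  have hsub := subst_lemma α (nr+γ) (β-nr)
  have e1 : (nr+γ)+(β-nr)+1 = γ+β+1 := by ring
  have e2 : -(α+(nr+γ)+(β-nr))-2 = -(α+γ+β+2) := by ring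
  rw [e1] at hsub
  simp only [e2] at hsub
  set J : ℝ := ∫ u in Set.Ioo (0:ℝ) 1, u ^ α * (1-u) ^ (nr+γ) * (2-u) ^ (-(α+γ+β+2)) with hJdef
  -- Beta integrals
  have hB1e := beta_eval (a := α+1) (b := nr+γ+1) hα1 (by linarith)
  have hB2e := beta_eval (a := α+1+1) (b := nr+γ+1) (by linarith) (by linarith)
  simp only [add_sub_cancel_right] at hB1e hB2e
  set B1 : ℝ := ∫ x in Set.Ioo (0:ℝ) 1, x ^ α * (1-x) ^ (nr+γ) with hB1def
  set B2 : ℝ := ∫ x in Set.Ioo (0:ℝ) 1, x ^ (α+1) * (1-x) ^ (nr+γ) with hB2def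
  set w : ℝ := α+1+(nr+γ+1) with hwdef
  have hw0 : 0 < w := by simp only [hwdef]; linarith
  have hGα : 0 < Real.Gamma (α+1) := Real.Gamma_pos_of_pos hα1
  have hGq : 0 < Real.Gamma (nr+γ+1) := Real.Gamma_pos_of_pos (by linarith)
  have hGw : 0 < Real.Gamma w := Real.Gamma_pos_of_pos hw0
  have hB1 : B1 = Real.Gamma (α+1) * Real.Gamma (nr+γ+1) / Real.Gamma w := hB1e
  have hB1pos : 0 < B1 := by rw [hB1]; positivity
  have hB2 : B2 = (α+1)/w * B1 := by
    rw [hB1, hB2e, Real.Gamma_add_one hα1.ne',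
      show α+1+1+(nr+γ+1) = w+1 by rw [hwdef]; ring, Real.Gamma_add_one hw0.ne']
    field_simp
  -- integrability
  have hc2 : ContinuousOn (fun u : ℝ => (2-u) ^ (-(α+γ+β+2))) (Set.Ioo (0:ℝ) 1) :=
    ContinuousOn.rpow_const (continuous_const.sub continuous_id).continuousOn
      (fun x hx => Or.inl (by have := hx.2; intro hcon; have : (2:ℝ) - x = 0 := hcon; linarith))
  have hJint : IntegrableOn (fun u : ℝ => u ^ α * (1-u) ^ (nr+γ) * (2-u) ^ (-(α+γ+β+2)))
      (Set.Ioo (0:ℝ) 1) :=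
    integrable_weighted hα hq hc2 (fun u hu => by
      rw [abs_of_nonneg (Real.rpow_nonneg (by linarith [hu.2] : (0:ℝ) ≤ 2-u) _)]
      exact two_sub_rpow_le (α+γ+β+2) hu.1.le hu.2.le)
  have hB1int : IntegrableOn (fun x : ℝ => x ^ α * (1-x) ^ (nr+γ)) (Set.Ioo (0:ℝ) 1) := by
    have := beta_integrable (a := α+1) (b := nr+γ+1) hα1 (by linarith)
    simpa only [add_sub_cancel_right] using this
  have hB2int : IntegrableOn (fun x : ℝ => x ^ (α+1) * (1-x) ^ (nr+γ)) (Set.Ioo (0:ℝ) 1) := by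
    have := beta_integrable (a := α+1+1) (b := nr+γ+1) (by linarith) (by linarith)
    simpa only [add_sub_cancel_right] using this
  -- error bound
  have hEbound : |J - 2 ^ (-(α+γ+β+2)) * B1| ≤ L * B2 := by
    have hXint : IntegrableOn (fun x : ℝ => 2 ^ (-(α+γ+β+2)) * (x ^ α * (1-x) ^ (nr+γ)))
        (Set.Ioo (0:ℝ) 1) := hB1int.const_mul _
    have hE1 : J - 2 ^ (-(α+γ+β+2)) * B1
        = ∫ u in Set.Ioo (0:ℝ) 1, (u ^ α * (1-u) ^ (nr+γ) * (2-u) ^ (-(α+γ+β+2))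
            - 2 ^ (-(α+γ+β+2)) * (u ^ α * (1-u) ^ (nr+γ))) := by
      rw [integral_sub hJint hXint, integral_const_mul]
    rw [hE1]
    have hgint : IntegrableOn (fun x : ℝ => L * (x ^ (α+1) * (1-x) ^ (nr+γ)))
        (Set.Ioo (0:ℝ) 1) := hB2int.const_mul _
    have hae : ∀ᵐ u ∂(volume.restrict (Set.Ioo (0:ℝ) 1)),
        ‖u ^ α * (1-u) ^ (nr+γ) * (2-u) ^ (-(α+γ+β+2))
          - 2 ^ (-(α+γ+β+2)) * (u ^ α * (1-u) ^ (nr+γ))‖ ≤ L * (u ^ (α+1) * (1-u) ^ (nr+γ)) := by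
      rw [ae_restrict_iff' measurableSet_Ioo]
      refine ae_of_all _ (fun u hu => ?_)
      obtain ⟨hu0, hu1⟩ := hu
      have h1u : (0:ℝ) < 1 - u := by linarith
      have hfac : u ^ α * (1-u) ^ (nr+γ) * (2-u) ^ (-(α+γ+β+2))
          - 2 ^ (-(α+γ+β+2)) * (u ^ α * (1-u) ^ (nr+γ))
          = (u ^ α * (1-u) ^ (nr+γ)) * ((2-u) ^ (-(α+γ+β+2)) - 2 ^ (-(α+γ+β+2))) := by ring
      rw [Real.norm_eq_abs, hfac, abs_mul,
        abs_of_nonneg (by positivity : (0:ℝ) ≤ u ^ α * (1-u) ^ (nr+γ))]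
      have hlip := hLip u ⟨hu0.le, hu1.le⟩
      calc u ^ α * (1-u) ^ (nr+γ) * |(2-u) ^ (-(α+γ+β+2)) - 2 ^ (-(α+γ+β+2))|
          ≤ u ^ α * (1-u) ^ (nr+γ) * (L * u) := by gcongr
        _ = L * (u ^ (α+1) * (1-u) ^ (nr+γ)) := by
            rw [Real.rpow_add_one (ne_of_gt hu0)]
            ring
    have key := MeasureTheory.norm_integral_le_of_norm_le hgint hae
    rw [Real.norm_eq_abs] at key
    rw [MeasureTheory.integral_const_mul] at key
    exact key
  -- delta
  set X : ℝ := 2 ^ (-(α+γ+β+2)) * B1 with hXdef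
  have hXpos : 0 < X := by positivity
  set δ : ℝ := J / X - 1 with hδdef
  have hJeq : J = X * (1 + δ) := by
    rw [hδdef]
    field_simp
    ring
  have hδb : |δ| ≤ Cδ / nr := by
    have hd1 : δ = (J - X) / X := by rw [hδdef]; field_simp
    rw [hd1, abs_div, abs_of_pos hXpos]
    rw [div_le_iff₀ hXpos]
    have hLB2 : L * B2 = L * (α+1) / w * B1 := by rw [hB2]; ring
    have hCw : L * (α+1) / w ≤ Cδ / nr * 2 ^ (-(α+γ+β+2)) := by
      have h2c : (0:ℝ) < 2 ^ (-(α+γ+β+2)) := by positivity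
      have h2c1 : (2:ℝ) ^ (α+γ+β+2) * 2 ^ (-(α+γ+β+2)) = 1 := by
        rw [← Real.rpow_add (by norm_num : (0:ℝ) < 2),
          show (α+γ+β+2) + -(α+γ+β+2) = 0 by ring, Real.rpow_zero]
      have hCδ : Cδ / nr * 2 ^ (-(α+γ+β+2)) = L * (α+1) / nr := by
        rw [hCδdef]
        calc 2 ^ (α+γ+β+2) * L * (α+1) / nr * 2 ^ (-(α+γ+β+2))
            = (2 ^ (α+γ+β+2) * 2 ^ (-(α+γ+β+2))) * (L * (α+1) / nr) := by ring
          _ = L * (α+1) / nr := by rw [h2c1]; ring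
      rw [hCδ]
      rw [div_le_div_iff₀ hw0 hnr0]
      have hwn : nr ≤ w := by simp only [hwdef]; linarith
      exact mul_le_mul_of_nonneg_left hwn (mul_nonneg hL0 hα1.le)
    calc |J - X| ≤ L * B2 := hEbound
      _ = L * (α+1) / w * B1 := hLB2
      _ ≤ (Cδ / nr * 2 ^ (-(α+γ+β+2))) * B1 := by gcongr
      _ = Cδ / nr * X := by rw [hXdef]; ring
  -- ratio
  obtain ⟨hDhalf, hDK⟩ := hKb n hn
  set D : ℝ := Real.Gamma (nr+(γ+1)+(α+1)) / Real.Gamma (nr+(γ+1)) / nr ^ (α+1) with hDdef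
  have hD0 : (0:ℝ) < D := lt_of_lt_of_le (by norm_num) hDhalf
  set ε₂ : ℝ := 1 / D - 1 with hε₂def
  have hε₂b : |ε₂| ≤ 2 * K / nr := by
    have h2D : 1 / D ≤ 2 := by
      rw [div_le_iff₀ hD0]; linarith
    have he : ε₂ = (1 - D) / D := by rw [hε₂def]; field_simp
    rw [he, abs_div, abs_of_pos hD0, abs_sub_comm, div_le_iff₀ hD0]
    calc |D - 1| ≤ K / nr := hDK
      _ ≤ 2 * K / nr * D := by
          have hKnr : 0 ≤ K / nr := div_nonneg hK0 hnr0.le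
          calc K/nr = K/nr * 1 := by ring
            _ ≤ K/nr * (2*D) := mul_le_mul_of_nonneg_left (by linarith) hKnr
            _ = 2*K/nr*D := by ring
  have hR : Real.Gamma (nr+γ+1) / Real.Gamma w = nr ^ (-(α+1)) * (1 / D) := by
    have hGq' : Real.Gamma (nr+(γ+1)) = Real.Gamma (nr+γ+1) := by ring_nf
    have hGw' : Real.Gamma (nr+(γ+1)+(α+1)) = Real.Gamma w := by rw [hwdef]; ring_nf
    rw [hDdef, hGq', hGw', Real.rpow_neg hnr0.le]
    have hp : (0:ℝ) < nr ^ (α+1) := Real.rpow_pos_of_pos hnr0 _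
    field_simp
  -- assembly
  have h2pow : (2:ℝ) ^ (γ+β+1) * 2 ^ (-(α+γ+β+2)) = 2 ^ (-α-1) := by
    rw [← Real.rpow_add (by norm_num : (0:ℝ) < 2)]
    congr 1
    ring
  have hfin : (2 * nr) ^ (-α-1) = 2 ^ (-α-1) * nr ^ (-(α+1)) := by
    rw [Real.mul_rpow (by norm_num) hnr0.le, show -(α+1) = -α-1 by ring]
  have hgoal : 2 ^ (γ+β+1) * (X * (1+δ))
      = (2 * nr) ^ (-α-1) * Real.Gamma (α+1) * ((1+ε₂)*(1+δ)) := by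
    rw [hXdef, hB1]
    have hsplit : Real.Gamma (α+1) * Real.Gamma (nr+γ+1) / Real.Gamma w
        = Real.Gamma (α+1) * (nr ^ (-(α+1)) * (1/D)) := by rw [← hR]; ring
    rw [hsplit, hfin, hε₂def, ← h2pow]
    ring
  refine ⟨ε₂ + δ + ε₂ * δ, ?_, ?_⟩
  · rw [hsub, hJeq, show (1:ℝ)+(ε₂+δ+ε₂*δ) = (1+ε₂)*(1+δ) by ring]
    exact hgoal
  · have hA : |(1 + ε₂) - 1| ≤ 2*K/nr := by rw [add_sub_cancel_left]; exact hε₂b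
    have hB : |(1 + δ) - 1| ≤ Cδ/nr := by rw [add_sub_cancel_left]; exact hδb
    have key := near_one_mul hA hB
    have he : (1 + ε₂) * (1 + δ) - 1 = ε₂ + δ + ε₂ * δ := by ring
    rw [he] at key
    have hprod : 2*K/nr * (Cδ/nr) ≤ 2*K*Cδ/nr := by
      have h1n : 1/nr ≤ 1 := by rw [div_le_one hnr0]; linarith
      have heq : 2*K/nr * (Cδ/nr) = (2*K*Cδ/nr) * (1/nr) := by ring
      rw [heq]
      calc (2*K*Cδ/nr) * (1/nr) ≤ (2*K*Cδ/nr) * 1 :=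
            mul_le_mul_of_nonneg_left h1n (by positivity)
        _ = 2*K*Cδ/nr := by ring
    have hsum : 2*K/nr + Cδ/nr + 2*K*Cδ/nr ≤ (2*K + Cδ + 2*K*Cδ + 1)/nr := by
      rw [← add_div, ← add_div, div_le_div_iff₀ hnr0 hnr0]
      exact mul_le_mul_of_nonneg_right (by linarith) hnr0.le
    calc |ε₂ + δ + ε₂ * δ| ≤ 2*K/nr + Cδ/nr + 2*K/nr * (Cδ/nr) := key
      _ ≤ 2*K/nr + Cδ/nr + 2*K*Cδ/nr := by linarith
      _ ≤ (2*K + Cδ + 2*K*Cδ + 1)/nr := hsum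
end

section
/- Suppose α > −1, γ > −1, β ∈ ℝ, and g : [0,1] → ℝ is continuous and satisfies |g(t) − g(0)| ≤ C t for all 0 ≤ t ≤ 1 and some constant C. Then there exists a constant C′ > 0 such that for every integer n ≥ 2, |∫₀¹ t^α (1−t)^{n+γ} (1+t)^{β−n} g(t) dt − (2n)^{−α−1} g(0) Γ(α+1)| ≤ C′ n^{−α−2}. -/
open Real MeasureTheory

lemma aux_exp_sub_one (x : ℝ) : |Real.exp x - 1| ≤ |x| * Real.exp |x| := by
  rcases le_or_gt 0 x with hx | hx
  · rw [abs_of_nonneg hx, abs_of_nonneg (by linarith [Real.one_le_exp hx])]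
    have h2 := mul_le_mul_of_nonneg_right (Real.add_one_le_exp (-x)) (Real.exp_pos x).le
    rw [← Real.exp_add, neg_add_cancel, Real.exp_zero] at h2
    nlinarith
  · rw [abs_of_neg hx, abs_of_nonpos (by linarith [Real.exp_lt_one_iff.2 hx])]
    nlinarith [Real.add_one_le_exp x, Real.one_le_exp (by linarith : (0:ℝ) ≤ -x)]

lemma aux_div_le_exp {t : ℝ} (h0 : 0 ≤ t) (h1 : t < 1) :
    (1 - t) / (1 + t) ≤ Real.exp (-t) := by
  rw [div_le_iff₀ (by linarith)]
  nlinarith [Real.add_one_le_exp (-t), Real.exp_pos (-t)]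

lemma aux_log_one_sub_bounds {t : ℝ} (h0 : 0 ≤ t) (h1 : t ≤ 1/8) :
    -(t + 4*t^2) ≤ Real.log (1 - t) ∧ Real.log (1 - t) ≤ -t := by
  have hp : (0:ℝ) < 1 - t := by linarith
  constructor
  · rw [Real.le_log_iff_exp_le hp]
    have h2 : Real.exp (t + 4*t^2) ≥ 1 + (t + 4*t^2) := by
      linarith [Real.add_one_le_exp (t + 4*t^2)]
    have h3 : Real.exp (-(t + 4*t^2)) = (Real.exp (t + 4*t^2))⁻¹ := by
      rw [Real.exp_neg]
    rw [h3, inv_le_iff_one_le_mul₀ (Real.exp_pos _)]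
    nlinarith
  · calc Real.log (1 - t) ≤ (1 - t) - 1 := Real.log_le_sub_one_of_pos hp
      _ = -t := by ring

lemma aux_log_one_add_bounds {t : ℝ} (h0 : 0 ≤ t) (h1 : t ≤ 1/8) :
    t - 4*t^2 ≤ Real.log (1 + t) ∧ Real.log (1 + t) ≤ t := by
  have hp : (0:ℝ) < 1 + t := by linarith
  constructor
  · rw [Real.le_log_iff_exp_le hp]
    have h2 : Real.exp (4*t^2 - t) ≥ 1 + (4*t^2 - t) := by
      linarith [Real.add_one_le_exp (4*t^2 - t)]
    have h4 : (0:ℝ) < 1 + (4*t^2 - t) := by nlinarith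
    have h3 : Real.exp (t - 4*t^2) = (Real.exp (4*t^2 - t))⁻¹ := by
      rw [← Real.exp_neg]; ring_nf
    rw [h3, inv_le_iff_one_le_mul₀ (Real.exp_pos _)]
    nlinarith
  · calc Real.log (1 + t) ≤ (1 + t) - 1 := Real.log_le_sub_one_of_pos hp
      _ = t := by ring

lemma aux_gamma_integrable {s b : ℝ} (hs : -1 < s) (hb : 0 < b) :
    IntegrableOn (fun t : ℝ => t ^ s * Real.exp (-(b * t))) (Set.Ioi 0) := by
  have h := integrableOn_rpow_mul_exp_neg_mul_rpow hs one_pos hb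
  refine h.congr_fun (fun x hx => ?_) measurableSet_Ioi
  simp only [Real.rpow_one, neg_mul]

lemma aux_gamma_value {s b : ℝ} (hs : -1 < s) (hb : 0 < b) :
    ∫ t in Set.Ioi (0:ℝ), t ^ s * Real.exp (-(b * t))
      = Real.Gamma (s + 1) * b ^ (-s - 1) := by
  have h := Real.integral_rpow_mul_exp_neg_mul_Ioi (a := s + 1) (r := b)
    (by linarith) hb
  simp only [add_sub_cancel_right] at h
  rw [h, mul_comm]
  congr 1
  rw [one_div, ← Real.rpow_neg_one, ← Real.rpow_mul hb.le]
  ring_nf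

lemma aux_psi_le (γ β : ℝ) (K : ℕ) (hKγ : -γ ≤ K) (hKβ : β ≤ K) {nn : ℝ}
    (hnK : (K:ℝ) ≤ nn) {t : ℝ} (ht0 : 0 < t) (ht1 : t < 1) :
    (1-t) ^ (nn+γ) * (1+t) ^ (β-nn) ≤ Real.exp (-((nn - K) * t)) := by
  have h1t : (0:ℝ) < 1 - t := by linarith
  have h1t' : (0:ℝ) < 1 + t := by linarith
  have e1 : (1-t) ^ (nn+γ) = (1-t) ^ (nn - K) * (1-t) ^ ((K:ℝ)+γ) := by
    rw [← Real.rpow_add h1t]; ring_nf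
  have e2 : (1+t) ^ (β-nn) = ((1+t) ^ (nn - K))⁻¹ * (1+t) ^ (β-(K:ℝ)) := by
    rw [← Real.rpow_neg h1t'.le, ← Real.rpow_add h1t']; ring_nf
  have key : (1-t) ^ (nn+γ) * (1+t) ^ (β-nn)
      = ((1-t)/(1+t)) ^ (nn - K) * ((1-t) ^ ((K:ℝ)+γ) * (1+t) ^ (β-(K:ℝ))) := by
    rw [e1, e2, Real.div_rpow h1t.le h1t'.le, div_eq_mul_inv]; ring
  have b1 : ((1-t)/(1+t)) ^ (nn - K) ≤ (Real.exp (-t)) ^ (nn - K) :=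
    Real.rpow_le_rpow (by positivity) (aux_div_le_exp ht0.le ht1) (by linarith)
  have b1' : (Real.exp (-t)) ^ (nn - K) = Real.exp (-((nn - K) * t)) := by
    rw [← Real.exp_mul]; ring_nf
  have b2 : (1-t) ^ ((K:ℝ)+γ) ≤ 1 := Real.rpow_le_one h1t.le (by linarith) (by linarith)
  have b3 : (1+t) ^ (β-(K:ℝ)) ≤ 1 :=
    Real.rpow_le_one_of_one_le_of_nonpos (by linarith) (by linarith)
  have hb2n : (0:ℝ) ≤ (1-t) ^ ((K:ℝ)+γ) := Real.rpow_nonneg h1t.le _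
  have hb3n : (0:ℝ) ≤ (1+t) ^ (β-(K:ℝ)) := Real.rpow_nonneg h1t'.le _
  calc (1-t) ^ (nn+γ) * (1+t) ^ (β-nn)
      = ((1-t)/(1+t)) ^ (nn - K) * ((1-t) ^ ((K:ℝ)+γ) * (1+t) ^ (β-(K:ℝ))) := key
    _ ≤ Real.exp (-((nn - K) * t)) * 1 := by
        rw [← b1']
        apply mul_le_mul (le_refl _ |>.trans b1) ?_ (by positivity)
          (Real.rpow_nonneg (Real.exp_pos _).le _)
        calc (1-t) ^ ((K:ℝ)+γ) * (1+t) ^ (β-(K:ℝ)) ≤ 1 * 1 :=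
              mul_le_mul b2 b3 hb3n (by norm_num)
          _ = 1 := by norm_num
    _ = Real.exp (-((nn - K) * t)) := by rw [mul_one]

set_option maxHeartbeats 1000000 in
lemma aux_central (γ β : ℝ) {nn t : ℝ} (hnn : 0 ≤ nn) (ht0 : 0 < t) (hle : t ≤ 1/8) :
    |(1-t) ^ (nn+γ) * (1+t) ^ (β-nn) - Real.exp (-(2*nn*t))|
      ≤ Real.exp (2*|γ|+|β|) * (4*nn*t^2 + (2*|γ|+|β|)*t) * Real.exp (-(nn*t)) := by
  have h1t : (0:ℝ) < 1 - t := by linarith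
  have h1t' : (0:ℝ) < 1 + t := by linarith
  set L1 := Real.log (1-t) with hL1def
  set L2 := Real.log (1+t) with hL2def
  set c0 := 2*|γ|+|β| with hc0def
  have hc0 : 0 ≤ c0 := by positivity
  obtain ⟨hL1a, hL1b⟩ := aux_log_one_sub_bounds ht0.le hle
  obtain ⟨hL2a, hL2b⟩ := aux_log_one_add_bounds ht0.le hle
  set Δ := (nn+γ)*L1 + (β-nn)*L2 + 2*nn*t with hΔdef
  have hψexp : (1-t) ^ (nn+γ) * (1+t) ^ (β-nn)
      = Real.exp ((nn+γ)*L1 + (β-nn)*L2) := by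
    rw [Real.exp_add, Real.rpow_def_of_pos h1t, Real.rpow_def_of_pos h1t',
      mul_comm L1, mul_comm L2]
  have hsub : (1-t) ^ (nn+γ) * (1+t) ^ (β-nn) - Real.exp (-(2*nn*t))
      = Real.exp (-(2*nn*t)) * (Real.exp Δ - 1) := by
    rw [hψexp, mul_sub, mul_one, ← Real.exp_add]
    congr 2
    rw [hΔdef]; ring
  -- |Δ| bound
  have ht4 : 4*t^2 ≤ t := by nlinarith
  have habs1 : |nn*(L1 - L2 + 2*t)| ≤ nn*(4*t^2) := by
    rw [abs_mul, abs_of_nonneg hnn]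
    apply mul_le_mul_of_nonneg_left _ hnn
    rw [abs_le]; constructor <;> nlinarith
  have habs2 : |γ*L1| ≤ |γ| * (2*t) := by
    rw [abs_mul]
    apply mul_le_mul_of_nonneg_left _ (abs_nonneg γ)
    rw [abs_le]; constructor <;> nlinarith
  have habs3 : |β*L2| ≤ |β| * t := by
    rw [abs_mul]
    apply mul_le_mul_of_nonneg_left _ (abs_nonneg β)
    rw [abs_le]; constructor <;> nlinarith
  have hΔeq : Δ = nn*(L1 - L2 + 2*t) + γ*L1 + β*L2 := by rw [hΔdef]; ring
  have hΔabs : |Δ| ≤ 4*nn*t^2 + c0*t := by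
    calc |Δ| ≤ |nn*(L1 - L2 + 2*t)| + |γ*L1| + |β*L2| := by
          rw [hΔeq]; exact (abs_add_le _ _).trans (by gcongr; exact abs_add_le _ _)
      _ ≤ nn*(4*t^2) + |γ| * (2*t) + |β| * t := by linarith
      _ = 4*nn*t^2 + c0*t := by rw [hc0def]; ring
  have hΔsmall : |Δ| ≤ nn*t/2 + c0*t := by
    have h48 : nn*t*t ≤ nn*t*(1/8) := mul_le_mul_of_nonneg_left hle (by positivity)
    nlinarith [hΔabs]
  have hnonneg4 : (0:ℝ) ≤ 4*nn*t^2 + c0*t := by positivity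
  calc |(1-t) ^ (nn+γ) * (1+t) ^ (β-nn) - Real.exp (-(2*nn*t))|
      = Real.exp (-(2*nn*t)) * |Real.exp Δ - 1| := by
        rw [hsub, abs_mul, abs_of_nonneg (Real.exp_pos _).le]
    _ ≤ Real.exp (-(2*nn*t)) * ((4*nn*t^2 + c0*t) * Real.exp (nn*t/2 + c0*t)) := by
        apply mul_le_mul_of_nonneg_left _ (Real.exp_pos _).le
        calc |Real.exp Δ - 1| ≤ |Δ| * Real.exp |Δ| := aux_exp_sub_one Δ
          _ ≤ (4*nn*t^2 + c0*t) * Real.exp (nn*t/2 + c0*t) :=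
              mul_le_mul hΔabs (Real.exp_le_exp.2 hΔsmall) (Real.exp_pos _).le hnonneg4
    _ = (4*nn*t^2 + c0*t) * (Real.exp (-(2*nn*t)) * Real.exp (nn*t/2 + c0*t)) := by ring
    _ = (4*nn*t^2 + c0*t) * Real.exp (-(2*nn*t) + (nn*t/2 + c0*t)) := by
        rw [← Real.exp_add]
    _ ≤ (4*nn*t^2 + c0*t) * Real.exp (c0 + -(nn*t)) := by
        apply mul_le_mul_of_nonneg_left _ hnonneg4
        apply Real.exp_le_exp.2
        nlinarith
    _ = Real.exp c0 * (4*nn*t^2 + c0*t) * Real.exp (-(nn*t)) := by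
        rw [Real.exp_add]; ring

set_option maxHeartbeats 1000000 in
lemma aux_key (α γ β C M : ℝ) (hα : α > -1) (hγ : γ > -1)
    (g : ℝ → ℝ) (hg : ContinuousOn g (Set.Icc 0 1))
    (hgC : ∀ t ∈ Set.Icc (0:ℝ) 1, |g t - g 0| ≤ C * t)
    (hM : ∀ t ∈ Set.Icc (0:ℝ) 1, |g t| ≤ M)
    (K : ℕ) (hKγ : -γ ≤ K) (hKβ : β ≤ K)
    (n : ℕ) (hn : 2*K + 2 ≤ n) :
    |(∫ t in Set.Ioo (0:ℝ) 1,
        t ^ α * (1 - t) ^ ((n : ℝ) + γ) * (1 + t) ^ (β - (n : ℝ)) * g t)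
      - (2 * (n : ℝ)) ^ (-α - 1) * g 0 * Real.Gamma (α + 1)|
    ≤ (C * Real.Gamma (α+2) * 2^(α+2)
       + |g 0| * Real.exp (2*|γ|+|β|) * 4 * Real.Gamma (α+3)
       + |g 0| * Real.exp (2*|γ|+|β|) * (2*|γ|+|β|) * Real.Gamma (α+2)
       + |g 0| * 2 * (max 1 ((8:ℝ)^(-α)))
           * (((Nat.ceil (α+2)).factorial : ℝ) * 16^(Nat.ceil (α+2)))
       + |g 0| * Real.Gamma (α+1)) * (n : ℝ) ^ (-α - 2) := by
  set nn := (n:ℝ) with hnndef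
  have hncast : (2*(K:ℝ) + 2) ≤ nn := by
    rw [hnndef]; exact_mod_cast hn
  have hK0 : (0:ℝ) ≤ K := Nat.cast_nonneg K
  have hnn2 : (2:ℝ) ≤ nn := by linarith
  have hnn0 : (0:ℝ) < nn := by linarith
  have hnn1 : (1:ℝ) ≤ nn := by linarith
  have hKnn : (K:ℝ) ≤ nn/2 := by linarith
  have hβnn : β ≤ nn := le_trans hKβ (by linarith)
  have hC : 0 ≤ C := by
    have h := hgC 1 ⟨zero_le_one, le_rfl⟩
    have := abs_nonneg (g 1 - g 0); linarith
  have hM0 : 0 ≤ M := le_trans (abs_nonneg _) (hM 0 ⟨le_rfl, zero_le_one⟩)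
  set c0 := 2*|γ|+|β| with hc0def
  have hc0 : 0 ≤ c0 := by rw [hc0def]; positivity
  set Mα := max 1 ((8:ℝ)^(-α)) with hMαdef
  have hMα0 : (0:ℝ) < Mα := lt_of_lt_of_le one_pos (le_max_left _ _)
  have hMαmax : max 1 ((8:ℝ)^(-α)) = Mα := by rw [hMαdef]
  clear_value nn c0 Mα
  -- integrability helpers
  have hIntIoi : ∀ s : ℝ, -1 < s → ∀ b : ℝ, 0 < b →
      IntegrableOn (fun t : ℝ => t ^ s * Real.exp (-(b * t))) (Set.Ioi 0) :=
    fun s hs b hb => aux_gamma_integrable hs hb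
  have hIntIoo : ∀ s : ℝ, -1 < s → ∀ b : ℝ, 0 < b →
      IntegrableOn (fun t : ℝ => t ^ s * Real.exp (-(b * t))) (Set.Ioo 0 1) :=
    fun s hs b hb => (aux_gamma_integrable hs hb).mono_set Set.Ioo_subset_Ioi_self
  have hIciIoi : Set.Ici (1:ℝ) ⊆ Set.Ioi 0 := fun x hx => show (0:ℝ) < x from lt_of_lt_of_le one_pos hx
  have hIntIci : ∀ s : ℝ, -1 < s → ∀ b : ℝ, 0 < b →
      IntegrableOn (fun t : ℝ => t ^ s * Real.exp (-(b * t))) (Set.Ici 1) :=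
    fun s hs b hb => (aux_gamma_integrable hs hb).mono_set hIciIoi
  have h2nn : (0:ℝ) < 2*nn := by linarith
  -- ψ upper bound
  have hψle : ∀ t ∈ Set.Ioo (0:ℝ) 1,
      (1-t) ^ (nn+γ) * (1+t) ^ (β-nn) ≤ Real.exp (-(nn/2*t)) := by
    intro t ht
    refine le_trans (aux_psi_le γ β K hKγ hKβ (by linarith) ht.1 ht.2) ?_
    apply Real.exp_le_exp.2
    nlinarith [ht.1.le, ht.2.le]
  have hψ0 : ∀ t ∈ Set.Ioo (0:ℝ) 1, (0:ℝ) ≤ (1-t) ^ (nn+γ) * (1+t) ^ (β-nn) := by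
    intro t ht
    have h1t : (0:ℝ) ≤ 1 - t := by linarith [ht.2]
    have h1t' : (0:ℝ) ≤ 1 + t := by linarith [ht.1]
    exact mul_nonneg (Real.rpow_nonneg h1t _) (Real.rpow_nonneg h1t' _)
  -- continuity of integrand
  have hcont : ContinuousOn
      (fun t : ℝ => t ^ α * (1-t) ^ (nn+γ) * (1+t) ^ (β-nn) * g t) (Set.Ioo 0 1) := by
    refine ContinuousOn.mul (ContinuousOn.mul (ContinuousOn.mul ?_ ?_) ?_)
      (hg.mono Set.Ioo_subset_Icc_self)
    · exact ContinuousOn.rpow_const continuousOn_id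
        (fun t ht => Or.inl (ne_of_gt ht.1))
    · exact ContinuousOn.rpow_const (continuous_const.sub continuous_id).continuousOn
        (fun t ht => Or.inl (sub_ne_zero_of_ne ht.2.ne'))
    · exact ContinuousOn.rpow_const (continuous_const.add continuous_id).continuousOn
        (fun t ht => Or.inl (show (0:ℝ) < 1 + t by linarith [ht.1]).ne')
  -- integrability of the integrand
  have hfnInt : IntegrableOn
      (fun t : ℝ => t ^ α * (1-t) ^ (nn+γ) * (1+t) ^ (β-nn) * g t) (Set.Ioo 0 1) := by
    apply Integrable.mono' (((hIntIoo α hα 1 one_pos).const_mul (M * Real.exp 1)))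
      (hcont.aestronglyMeasurable measurableSet_Ioo)
    filter_upwards [ae_restrict_mem measurableSet_Ioo] with t ht
    obtain ⟨ht0, ht1⟩ := ht
    have h1t : (0:ℝ) < 1 - t := by linarith
    have h1t' : (0:ℝ) < 1 + t := by linarith
    have hb1 : (1-t) ^ (nn+γ) ≤ 1 := Real.rpow_le_one h1t.le (by linarith) (by linarith)
    have hb2 : (1+t) ^ (β-nn) ≤ 1 :=
      Real.rpow_le_one_of_one_le_of_nonpos (by linarith) (by linarith)
    have hgle := hM t ⟨ht0.le, ht1.le⟩
    have htα : (0:ℝ) ≤ t ^ α := Real.rpow_nonneg ht0.le _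
    have hr1 : (0:ℝ) ≤ (1-t) ^ (nn+γ) := Real.rpow_nonneg h1t.le _
    have hr2 : (0:ℝ) ≤ (1+t) ^ (β-nn) := Real.rpow_nonneg h1t'.le _
    rw [Real.norm_eq_abs, abs_mul, abs_mul, abs_mul, abs_of_nonneg htα,
      abs_of_nonneg hr1, abs_of_nonneg hr2]
    have hexp : t ^ α ≤ Real.exp 1 * (t ^ α * Real.exp (-(1*t))) := by
      have h1 : Real.exp (-1) ≤ Real.exp (-(1*t)) := Real.exp_le_exp.2 (by linarith)
      have h2 : (1:ℝ) ≤ Real.exp 1 * Real.exp (-(1*t)) := by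
        have h3 := mul_le_mul_of_nonneg_left h1 (Real.exp_pos 1).le
        rw [← Real.exp_add] at h3
        norm_num at h3
        rw [one_mul]
        exact h3
      calc t ^ α = t ^ α * 1 := (mul_one _).symm
        _ ≤ t ^ α * (Real.exp 1 * Real.exp (-(1*t))) := mul_le_mul_of_nonneg_left h2 htα
        _ = Real.exp 1 * (t ^ α * Real.exp (-(1*t))) := by ring
    calc t^α * (1-t)^(nn+γ) * (1+t)^(β-nn) * |g t|
        ≤ t^α * 1 * 1 * M := by gcongr
      _ = M * t^α := by ring
      _ ≤ M * (Real.exp 1 * (t^α * Real.exp (-(1*t)))) :=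
          mul_le_mul_of_nonneg_left hexp hM0
      _ = (M * Real.exp 1) * (t^α * Real.exp (-(1*t))) := by ring
  -- majorant B
  set B : ℝ → ℝ := fun t => C * (t^(α+1) * Real.exp (-(nn/2*t)))
      + |g 0| * Real.exp c0 * (4*nn) * (t^(α+2) * Real.exp (-(nn*t)))
      + |g 0| * Real.exp c0 * c0 * (t^(α+1) * Real.exp (-(nn*t)))
      + |g 0| * (2 * Mα * Real.exp (-(nn/16))) with hBdef
  have hIB1 := (hIntIoo (α+1) (by linarith) (nn/2) (by linarith)).const_mul C
  have hIB2 := (hIntIoo (α+2) (by linarith) nn hnn0).const_mul (|g 0| * Real.exp c0 * (4*nn))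
  have hIB3 := (hIntIoo (α+1) (by linarith) nn hnn0).const_mul (|g 0| * Real.exp c0 * c0)
  have hIB4 : IntegrableOn (fun _ : ℝ => |g 0| * (2 * Mα * Real.exp (-(nn/16))))
      (Set.Ioo 0 1) := integrableOn_const measure_Ioo_lt_top.ne
  have hBInt : IntegrableOn B (Set.Ioo 0 1) := by
    rw [hBdef]; exact ((hIB1.add hIB2).add hIB3).add hIB4
  -- pointwise bound by B
  have hptB : ∀ t ∈ Set.Ioo (0:ℝ) 1,
      |(t ^ α * (1-t) ^ (nn+γ) * (1+t) ^ (β-nn) * g t)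
        - g 0 * (t^α * Real.exp (-(2*nn*t)))| ≤ B t := by
    intro t ht
    obtain ⟨ht0, ht1⟩ := ht
    have h1t : (0:ℝ) < 1 - t := by linarith
    have h1t' : (0:ℝ) < 1 + t := by linarith
    have htα : (0:ℝ) ≤ t ^ α := Real.rpow_nonneg ht0.le _
    have hψt0 := hψ0 t ⟨ht0, ht1⟩
    have hψtle := hψle t ⟨ht0, ht1⟩
    have hrw1 : t^(α+1) = t^α * t := by rw [Real.rpow_add ht0, Real.rpow_one]
    have hrw2 : t^(α+2) = t^α * t^2 := by rw [Real.rpow_add ht0, Real.rpow_two]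
    have hdec : (t ^ α * (1-t) ^ (nn+γ) * (1+t) ^ (β-nn) * g t)
        - g 0 * (t^α * Real.exp (-(2*nn*t)))
        = t^α * ((1-t)^(nn+γ) * (1+t)^(β-nn)) * (g t - g 0)
          + g 0 * (t^α * ((1-t)^(nn+γ) * (1+t)^(β-nn) - Real.exp (-(2*nn*t)))) := by
      ring
    have hterm1 : |t^α * ((1-t)^(nn+γ) * (1+t)^(β-nn)) * (g t - g 0)|
        ≤ C * (t^(α+1) * Real.exp (-(nn/2*t))) := by
      rw [abs_mul, abs_mul, abs_of_nonneg htα, abs_of_nonneg hψt0]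
      calc t^α * ((1-t)^(nn+γ) * (1+t)^(β-nn)) * |g t - g 0|
          ≤ t^α * Real.exp (-(nn/2*t)) * (C*t) := by
            apply mul_le_mul (mul_le_mul_of_nonneg_left hψtle htα)
              (hgC t ⟨ht0.le, ht1.le⟩) (abs_nonneg _)
            positivity
        _ = C * ((t^α * t) * Real.exp (-(nn/2*t))) := by ring
        _ = C * (t^(α+1) * Real.exp (-(nn/2*t))) := by rw [← hrw1]
    have hterm2 : |g 0| * (t^α * |(1-t)^(nn+γ) * (1+t)^(β-nn) - Real.exp (-(2*nn*t))|)
        ≤ |g 0| * Real.exp c0 * (4*nn) * (t^(α+2) * Real.exp (-(nn*t)))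
          + |g 0| * Real.exp c0 * c0 * (t^(α+1) * Real.exp (-(nn*t)))
          + |g 0| * (2 * Mα * Real.exp (-(nn/16))) := by
      rcases le_or_gt t (1/8) with hle | hgt
      · have hc := aux_central γ β hnn0.le ht0 hle
        rw [← hc0def] at hc
        have : t^α * |(1-t)^(nn+γ) * (1+t)^(β-nn) - Real.exp (-(2*nn*t))|
            ≤ t^α * (Real.exp c0 * (4*nn*t^2 + c0*t) * Real.exp (-(nn*t))) :=
          mul_le_mul_of_nonneg_left hc htα
        have heq : t^α * (Real.exp c0 * (4*nn*t^2 + c0*t) * Real.exp (-(nn*t)))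
            = Real.exp c0 * (4*nn) * (t^(α+2) * Real.exp (-(nn*t)))
              + Real.exp c0 * c0 * (t^(α+1) * Real.exp (-(nn*t))) := by
          rw [hrw1, hrw2]; ring
        have h3 : (0:ℝ) ≤ |g 0| * (2 * Mα * Real.exp (-(nn/16))) := by positivity
        have h4 := mul_le_mul_of_nonneg_left (this.trans_eq heq) (abs_nonneg (g 0))
        calc |g 0| * (t^α * |(1-t)^(nn+γ) * (1+t)^(β-nn) - Real.exp (-(2*nn*t))|)
            ≤ |g 0| * (Real.exp c0 * (4*nn) * (t^(α+2) * Real.exp (-(nn*t)))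
                + Real.exp c0 * c0 * (t^(α+1) * Real.exp (-(nn*t)))) := h4
          _ = |g 0| * Real.exp c0 * (4*nn) * (t^(α+2) * Real.exp (-(nn*t)))
                + |g 0| * Real.exp c0 * c0 * (t^(α+1) * Real.exp (-(nn*t))) := by ring
          _ ≤ _ := le_add_of_nonneg_right h3
      · -- outer region
        have hψsmall : (1-t)^(nn+γ) * (1+t)^(β-nn) ≤ Real.exp (-(nn/16)) := by
          refine hψtle.trans (Real.exp_le_exp.2 ?_)
          nlinarith
        have hesmall : Real.exp (-(2*nn*t)) ≤ Real.exp (-(nn/16)) := by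
          apply Real.exp_le_exp.2; nlinarith
        have habs : |(1-t)^(nn+γ) * (1+t)^(β-nn) - Real.exp (-(2*nn*t))|
            ≤ 2 * Real.exp (-(nn/16)) := by
          rw [abs_le]; constructor
          · have := Real.exp_pos (-(2*nn*t))
            have := Real.exp_pos (-(nn/16))
            nlinarith [hψt0]
          · have := Real.exp_pos (-(2*nn*t))
            have := Real.exp_pos (-(nn/16))
            nlinarith
        have htαM : t^α ≤ Mα := by
          rw [← hMαmax]
          rcases le_or_gt 0 α with hα0 | hα0
          · exact le_trans (Real.rpow_le_one ht0.le ht1.le hα0) (le_max_left _ _)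
          · refine le_trans ?_ (le_max_right _ _)
            have h8 : t^α ≤ (1/8 : ℝ)^α :=
              Real.rpow_le_rpow_of_nonpos (by norm_num) hgt.le hα0.le
            refine h8.trans (le_of_eq ?_)
            rw [one_div, Real.inv_rpow (by norm_num), ← Real.rpow_neg (by norm_num)]
        have h1 : t^α * |(1-t)^(nn+γ) * (1+t)^(β-nn) - Real.exp (-(2*nn*t))|
            ≤ Mα * (2 * Real.exp (-(nn/16))) :=
          mul_le_mul htαM habs (abs_nonneg _) hMα0.le
        have h2 : (0:ℝ) ≤ Real.exp c0 * (4*nn) * (t^(α+2) * Real.exp (-(nn*t))) := by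
          positivity
        have h3 : (0:ℝ) ≤ Real.exp c0 * c0 * (t^(α+1) * Real.exp (-(nn*t))) := by
          positivity
        have h4 := mul_le_mul_of_nonneg_left h1 (abs_nonneg (g 0))
        have ha : (0:ℝ) ≤ |g 0| * Real.exp c0 * (4*nn) * (t^(α+2) * Real.exp (-(nn*t))) := by
          positivity
        have hb : (0:ℝ) ≤ |g 0| * Real.exp c0 * c0 * (t^(α+1) * Real.exp (-(nn*t))) := by
          positivity
        calc |g 0| * (t^α * |(1-t)^(nn+γ) * (1+t)^(β-nn) - Real.exp (-(2*nn*t))|)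
            ≤ |g 0| * (Mα * (2 * Real.exp (-(nn/16)))) := h4
          _ = |g 0| * (2 * Mα * Real.exp (-(nn/16))) := by ring
          _ ≤ _ := le_add_of_nonneg_left (add_nonneg ha hb)
    calc |(t ^ α * (1-t) ^ (nn+γ) * (1+t) ^ (β-nn) * g t)
          - g 0 * (t^α * Real.exp (-(2*nn*t)))|
        ≤ |t^α * ((1-t)^(nn+γ) * (1+t)^(β-nn)) * (g t - g 0)|
          + |g 0 * (t^α * ((1-t)^(nn+γ) * (1+t)^(β-nn) - Real.exp (-(2*nn*t))))| := by
          rw [hdec]; exact abs_add_le _ _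
      _ ≤ B t := by
          simp only [hBdef]
          have heq2 : |g 0 * (t^α * ((1-t)^(nn+γ) * (1+t)^(β-nn) - Real.exp (-(2*nn*t))))|
              = |g 0| * (t^α * |(1-t)^(nn+γ) * (1+t)^(β-nn) - Real.exp (-(2*nn*t))|) := by
            rw [abs_mul, abs_mul, abs_of_nonneg htα]
          rw [heq2]
          linarith [hterm1, hterm2]
  -- Gamma integral values
  have hA : ∫ t in Set.Ioi (0:ℝ), t^α * Real.exp (-(2*nn*t))
      = Real.Gamma (α+1) * (2*nn)^(-α-1) := by
    have h := aux_gamma_value hα h2nn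
    simpa using h
  have hdisj : Disjoint (Set.Ioo (0:ℝ) 1) (Set.Ici 1) := by
    rw [Set.disjoint_left]
    rintro x ⟨_, h1⟩ h2
    exact absurd h2 (not_le.2 h1)
  have hsplit : ∫ t in Set.Ioi (0:ℝ), t^α * Real.exp (-(2*nn*t))
      = (∫ t in Set.Ioo (0:ℝ) 1, t^α * Real.exp (-(2*nn*t)))
        + ∫ t in Set.Ici (1:ℝ), t^α * Real.exp (-(2*nn*t)) := by
    rw [← setIntegral_union hdisj measurableSet_Ici
      (hIntIoo α hα (2*nn) h2nn) (hIntIci α hα (2*nn) h2nn),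
      Set.Ioo_union_Ici_eq_Ioi zero_lt_one]
  -- identity
  have hid : (∫ t in Set.Ioo (0:ℝ) 1, t ^ α * (1-t) ^ (nn+γ) * (1+t) ^ (β-nn) * g t)
        - (2*nn)^(-α-1) * g 0 * Real.Gamma (α+1)
      = (∫ t in Set.Ioo (0:ℝ) 1, ((t ^ α * (1-t) ^ (nn+γ) * (1+t) ^ (β-nn) * g t)
            - g 0 * (t^α * Real.exp (-(2*nn*t)))))
        - g 0 * ∫ t in Set.Ici (1:ℝ), t^α * Real.exp (-(2*nn*t)) := by
    rw [integral_sub hfnInt ((hIntIoo α hα (2*nn) h2nn).const_mul (g 0)),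
      integral_const_mul]
    have h5 : (2*nn)^(-α-1) * g 0 * Real.Gamma (α+1)
        = g 0 * ((∫ t in Set.Ioo (0:ℝ) 1, t^α * Real.exp (-(2*nn*t)))
            + ∫ t in Set.Ici (1:ℝ), t^α * Real.exp (-(2*nn*t))) := by
      rw [← hsplit, hA]; ring
    rw [h5]; ring
  rw [hid]
  -- bound on the main integral
  have hb1 : |∫ t in Set.Ioo (0:ℝ) 1, ((t ^ α * (1-t) ^ (nn+γ) * (1+t) ^ (β-nn) * g t)
        - g 0 * (t^α * Real.exp (-(2*nn*t))))| ≤ ∫ t in Set.Ioo (0:ℝ) 1, B t := by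
    rw [← Real.norm_eq_abs]
    apply norm_integral_le_of_norm_le hBInt
    filter_upwards [ae_restrict_mem measurableSet_Ioo] with t ht
    rw [Real.norm_eq_abs]
    exact hptB t ht
  -- values of the pieces
  have hmono : ∀ s : ℝ, -1 < s → ∀ b : ℝ, 0 < b →
      (∫ t in Set.Ioo (0:ℝ) 1, t^s * Real.exp (-(b*t)))
        ≤ Real.Gamma (s+1) * b^(-s-1) := by
    intro s hs b hb
    rw [← aux_gamma_value hs hb]
    apply setIntegral_mono_set (hIntIoi s hs b hb)
    · filter_upwards [ae_restrict_mem measurableSet_Ioi] with x hx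
      have : (0:ℝ) < x := hx
      positivity
    · exact HasSubset.Subset.eventuallyLE Set.Ioo_subset_Ioi_self
  have hBval : (∫ t in Set.Ioo (0:ℝ) 1, B t)
      ≤ C * (Real.Gamma (α+2) * (nn/2)^(-α-2))
        + |g 0| * Real.exp c0 * (4*nn) * (Real.Gamma (α+3) * nn^(-α-3))
        + |g 0| * Real.exp c0 * c0 * (Real.Gamma (α+2) * nn^(-α-2))
        + |g 0| * (2 * Mα * Real.exp (-(nn/16))) := by
    have e1 : (∫ t in Set.Ioo (0:ℝ) 1, B t)
        = C * (∫ t in Set.Ioo (0:ℝ) 1, t^(α+1) * Real.exp (-(nn/2*t)))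
          + |g 0| * Real.exp c0 * (4*nn)
              * (∫ t in Set.Ioo (0:ℝ) 1, t^(α+2) * Real.exp (-(nn*t)))
          + |g 0| * Real.exp c0 * c0
              * (∫ t in Set.Ioo (0:ℝ) 1, t^(α+1) * Real.exp (-(nn*t)))
          + |g 0| * (2 * Mα * Real.exp (-(nn/16))) := by
      have hIB12 : Integrable (fun x : ℝ => C * (x^(α+1) * Real.exp (-(nn/2*x)))
          + |g 0| * Real.exp c0 * (4*nn) * (x^(α+2) * Real.exp (-(nn*x))))
          (volume.restrict (Set.Ioo 0 1)) := hIB1.add hIB2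
      have hIB123 : Integrable (fun x : ℝ => (C * (x^(α+1) * Real.exp (-(nn/2*x)))
          + |g 0| * Real.exp c0 * (4*nn) * (x^(α+2) * Real.exp (-(nn*x))))
          + |g 0| * Real.exp c0 * c0 * (x^(α+1) * Real.exp (-(nn*x))))
          (volume.restrict (Set.Ioo 0 1)) := hIB12.add hIB3
      simp only [hBdef]
      rw [integral_add hIB123 hIB4, integral_add hIB12 hIB3, integral_add hIB1 hIB2,
        integral_const_mul, integral_const_mul, integral_const_mul]
      congr 1
      rw [MeasureTheory.setIntegral_const]
      simp [Real.volume_Ioo]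
    rw [e1]
    have m1 := hmono (α+1) (by linarith) (nn/2) (by linarith)
    have m2 := hmono (α+2) (by linarith) nn hnn0
    have m3 := hmono (α+1) (by linarith) nn hnn0
    have c1 : Real.Gamma (α+1+1) = Real.Gamma (α+2) := by congr 1; ring
    have c2 : Real.Gamma (α+2+1) = Real.Gamma (α+3) := by congr 1; ring
    have c3 : -(α+1)-1 = -α-2 := by ring
    have c4 : -(α+2)-1 = -α-3 := by ring
    rw [c1, c3] at m1 m3
    rw [c2, c4] at m2
    have k1 : (0:ℝ) ≤ |g 0| * Real.exp c0 * (4*nn) := by positivity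
    have k2 : (0:ℝ) ≤ |g 0| * Real.exp c0 * c0 := by positivity
    have t1 := mul_le_mul_of_nonneg_left m1 hC
    have t2 := mul_le_mul_of_nonneg_left m2 k1
    have t3 := mul_le_mul_of_nonneg_left m3 k2
    exact add_le_add (add_le_add (add_le_add t1 t2) t3) le_rfl
  -- tail bound
  have htail : (∫ t in Set.Ici (1:ℝ), t^α * Real.exp (-(2*nn*t)))
      ≤ Real.exp (-nn) * (Real.Gamma (α+1) * nn^(-α-1)) := by
    have hm : ∀ t ∈ Set.Ici (1:ℝ),
        t^α * Real.exp (-(2*nn*t)) ≤ Real.exp (-nn) * (t^α * Real.exp (-(nn*t))) := by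
      intro t ht
      have ht1 : (1:ℝ) ≤ t := ht
      have ht0 : (0:ℝ) < t := by linarith
      have htα : (0:ℝ) ≤ t^α := Real.rpow_nonneg ht0.le _
      have he : Real.exp (-(2*nn*t)) = Real.exp (-(nn*t)) * Real.exp (-(nn*t)) := by
        rw [← Real.exp_add]; ring_nf
      have he2 : Real.exp (-(nn*t)) ≤ Real.exp (-nn) := by
        apply Real.exp_le_exp.2; nlinarith
      calc t^α * Real.exp (-(2*nn*t))
          = (t^α * Real.exp (-(nn*t))) * Real.exp (-(nn*t)) := by rw [he]; ring
        _ ≤ (t^α * Real.exp (-(nn*t))) * Real.exp (-nn) := by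
            apply mul_le_mul_of_nonneg_left he2; positivity
        _ = Real.exp (-nn) * (t^α * Real.exp (-(nn*t))) := by ring
    calc (∫ t in Set.Ici (1:ℝ), t^α * Real.exp (-(2*nn*t)))
        ≤ ∫ t in Set.Ici (1:ℝ), Real.exp (-nn) * (t^α * Real.exp (-(nn*t))) :=
          setIntegral_mono_on (hIntIci α hα (2*nn) h2nn)
            ((hIntIci α hα nn hnn0).const_mul _) measurableSet_Ici hm
      _ = Real.exp (-nn) * ∫ t in Set.Ici (1:ℝ), t^α * Real.exp (-(nn*t)) := by
          rw [integral_const_mul]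
      _ ≤ Real.exp (-nn) * (Real.Gamma (α+1) * nn^(-α-1)) := by
          apply mul_le_mul_of_nonneg_left _ (Real.exp_pos _).le
          rw [← aux_gamma_value hα hnn0]
          apply setIntegral_mono_set (hIntIoi α hα nn hnn0)
          · filter_upwards [ae_restrict_mem measurableSet_Ioi] with x hx
            have : (0:ℝ) < x := hx
            positivity
          · exact HasSubset.Subset.eventuallyLE hIciIoi
  have htail0 : (0:ℝ) ≤ ∫ t in Set.Ici (1:ℝ), t^α * Real.exp (-(2*nn*t)) := by
    apply setIntegral_nonneg measurableSet_Ici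
    intro t ht
    have ht0 : (0:ℝ) < t := lt_of_lt_of_le one_pos ht
    positivity
  -- rpow arithmetic
  have r1 : (nn/2)^(-α-2) = nn^(-α-2) * (2:ℝ)^(α+2) := by
    have h2 : ((2:ℝ)⁻¹)^(-α-2) = (2:ℝ)^(α+2) := by
      rw [Real.inv_rpow (by norm_num), ← Real.rpow_neg (by norm_num),
        show -(-α-2) = α+2 by ring]
    rw [show nn/2 = nn * 2⁻¹ by ring, Real.mul_rpow hnn0.le (by norm_num), h2]
  have r2 : nn * nn^(-α-3) = nn^(-α-2) := by
    rw [show (-α-2) = 1 + (-α-3) by ring, Real.rpow_add hnn0, Real.rpow_one]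
  set m := Nat.ceil (α+2) with hmdef
  have hmceil : α+2 ≤ (m:ℝ) := by rw [hmdef]; exact Nat.le_ceil _
  clear_value m
  have r3 : Real.exp (-(nn/16)) ≤ ((m.factorial : ℝ) * 16^m) * nn^(-α-2) := by
    have hm : α+2 ≤ (m:ℝ) := hmceil
    have h1 : nn^(α+2) ≤ nn^((m:ℕ):ℝ) := Real.rpow_le_rpow_of_exponent_le hnn1 hm
    have h2 : nn^((m:ℕ):ℝ) = nn^(m:ℕ) := Real.rpow_natCast nn m
    have h4 : nn^(m:ℕ) = (nn/16)^(m:ℕ) * 16^(m:ℕ) := by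
      rw [div_pow]
      field_simp
    have h3 : (nn/16)^(m:ℕ) ≤ (m.factorial : ℝ) * Real.exp (nn/16) := by
      have h5 := Real.pow_div_factorial_le_exp (nn/16) (by positivity : (0:ℝ) ≤ nn/16) m
      rw [div_le_iff₀ (by positivity : (0:ℝ) < (m.factorial : ℝ))] at h5
      linarith [h5]
    have key : nn^(α+2) ≤ ((m.factorial : ℝ) * 16^m) * Real.exp (nn/16) := by
      calc nn^(α+2) ≤ nn^((m:ℕ):ℝ) := h1
        _ = nn^(m:ℕ) := h2
        _ = (nn/16)^(m:ℕ) * 16^(m:ℕ) := h4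
        _ ≤ ((m.factorial : ℝ) * Real.exp (nn/16)) * 16^(m:ℕ) :=
            mul_le_mul_of_nonneg_right h3 (by positivity)
        _ = ((m.factorial : ℝ) * 16^m) * Real.exp (nn/16) := by ring
    have e1 : Real.exp (-(nn/16)) * nn^(α+2) ≤ (m.factorial : ℝ) * 16^m := by
      rw [Real.exp_neg, inv_mul_le_iff₀ (Real.exp_pos _)]
      exact key.trans (le_of_eq (mul_comm _ _))
    have e2 : Real.exp (-(nn/16))
        = (Real.exp (-(nn/16)) * nn^(α+2)) * nn^(-α-2) := by
      rw [mul_assoc, ← Real.rpow_add hnn0, show (α+2) + (-α-2) = 0 by ring,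
        Real.rpow_zero, mul_one]
    rw [e2]
    exact mul_le_mul_of_nonneg_right e1 (Real.rpow_nonneg hnn0.le _)
  have r4 : Real.exp (-nn) * nn^(-α-1) ≤ nn^(-α-2) := by
    have hxe : Real.exp (-nn) ≤ nn⁻¹ := by
      rw [Real.exp_neg]
      apply inv_anti₀ hnn0
      linarith [Real.add_one_le_exp nn]
    have e3 : nn^(-α-2) = nn⁻¹ * nn^(-α-1) := by
      rw [show (-α-2) = (-1) + (-α-1) by ring, Real.rpow_add hnn0,
        Real.rpow_neg_one]
    rw [e3]
    exact mul_le_mul_of_nonneg_right hxe (Real.rpow_nonneg hnn0.le _)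
  -- final combination
  have hΓ1 : (0:ℝ) ≤ Real.Gamma (α+1) := (Real.Gamma_pos_of_pos (by linarith)).le
  have hT1 : C * (Real.Gamma (α+2) * (nn/2)^(-α-2))
      = (C * Real.Gamma (α+2) * 2^(α+2)) * nn^(-α-2) := by rw [r1]; ring
  have hT2 : |g 0| * Real.exp c0 * (4*nn) * (Real.Gamma (α+3) * nn^(-α-3))
      = (|g 0| * Real.exp c0 * 4 * Real.Gamma (α+3)) * nn^(-α-2) := by
    rw [← r2]; ring
  have hT4 : |g 0| * (2 * Mα * Real.exp (-(nn/16)))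
      ≤ (|g 0| * 2 * Mα * ((m.factorial : ℝ) * 16^m)) * nn^(-α-2) := by
    calc |g 0| * (2 * Mα * Real.exp (-(nn/16)))
        = (|g 0| * 2 * Mα) * Real.exp (-(nn/16)) := by ring
      _ ≤ (|g 0| * 2 * Mα) * (((m.factorial : ℝ) * 16^m) * nn^(-α-2)) := by
          apply mul_le_mul_of_nonneg_left r3; positivity
      _ = (|g 0| * 2 * Mα * ((m.factorial : ℝ) * 16^m)) * nn^(-α-2) := by ring
  have hT5 : |g 0| * (∫ t in Set.Ici (1:ℝ), t^α * Real.exp (-(2*nn*t)))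
      ≤ (|g 0| * Real.Gamma (α+1)) * nn^(-α-2) := by
    calc |g 0| * (∫ t in Set.Ici (1:ℝ), t^α * Real.exp (-(2*nn*t)))
        ≤ |g 0| * (Real.exp (-nn) * (Real.Gamma (α+1) * nn^(-α-1))) :=
          mul_le_mul_of_nonneg_left htail (abs_nonneg _)
      _ = |g 0| * Real.Gamma (α+1) * (Real.exp (-nn) * nn^(-α-1)) := by ring
      _ ≤ |g 0| * Real.Gamma (α+1) * nn^(-α-2) := by
          apply mul_le_mul_of_nonneg_left r4; positivity
      _ = (|g 0| * Real.Gamma (α+1)) * nn^(-α-2) := by ring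
  calc |(∫ t in Set.Ioo (0:ℝ) 1, ((t ^ α * (1-t) ^ (nn+γ) * (1+t) ^ (β-nn) * g t)
            - g 0 * (t^α * Real.exp (-(2*nn*t)))))
        - g 0 * ∫ t in Set.Ici (1:ℝ), t^α * Real.exp (-(2*nn*t))|
      ≤ |(∫ t in Set.Ioo (0:ℝ) 1, ((t ^ α * (1-t) ^ (nn+γ) * (1+t) ^ (β-nn) * g t)
            - g 0 * (t^α * Real.exp (-(2*nn*t)))))|
        + |g 0| * (∫ t in Set.Ici (1:ℝ), t^α * Real.exp (-(2*nn*t))) := by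
        refine (abs_sub _ _).trans ?_
        rw [abs_mul, abs_of_nonneg htail0]
    _ ≤ _ := by
        have hT3 : |g 0| * Real.exp c0 * c0 * (Real.Gamma (α+2) * nn^(-α-2))
            = (|g 0| * Real.exp c0 * c0 * Real.Gamma (α+2)) * nn^(-α-2) := by ring
        rw [add_mul, add_mul, add_mul, add_mul]
        have hsum := hb1.trans hBval
        rw [hT1, hT2, hT3] at hsum
        linarith [hsum, hT4, hT5]

/-- If g is continuous on [0,1] with |g(t) − g(0)| ≤ C t, then there is C′ > 0 with
|∫₀¹ t^α (1−t)^{n+γ} (1+t)^{β−n} g(t) dt − (2n)^{−α−1} g(0) Γ(α+1)| ≤ C′ n^{−α−2} for all n ≥ 2. -/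
theorem statement1 (α γ β C : ℝ) (hα : α > -1) (hγ : γ > -1)
    (g : ℝ → ℝ) (hg : ContinuousOn g (Set.Icc 0 1))
    (hgC : ∀ t ∈ Set.Icc (0:ℝ) 1, |g t - g 0| ≤ C * t) :
    ∃ C' : ℝ, C' > 0 ∧ ∀ n : ℕ, 2 ≤ n →
      |(∫ t in Set.Ioo (0:ℝ) 1,
          t ^ α * (1 - t) ^ ((n : ℝ) + γ) * (1 + t) ^ (β - (n : ℝ)) * g t)
        - (2 * (n : ℝ)) ^ (-α - 1) * g 0 * Real.Gamma (α + 1)|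
        ≤ C' * (n : ℝ) ^ (-α - 2) := by
  obtain ⟨M, hM⟩ := isCompact_Icc.exists_bound_of_continuousOn hg
  have hM' : ∀ t ∈ Set.Icc (0:ℝ) 1, |g t| ≤ M := fun t ht => by
    simpa [Real.norm_eq_abs] using hM t ht
  set K := Nat.ceil (max |γ| |β|) with hKdef
  have hKmax : max |γ| |β| ≤ (K:ℝ) := by rw [hKdef]; exact Nat.le_ceil _
  have hKγ : -γ ≤ (K:ℝ) := by
    have h1 : -γ ≤ max |γ| |β| := le_trans (neg_le_abs γ) (le_max_left _ _)
    linarith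
  have hKβ : β ≤ (K:ℝ) := by
    have h1 : β ≤ max |γ| |β| := le_trans (le_abs_self β) (le_max_right _ _)
    linarith
  have hC : 0 ≤ C := by
    have h := hgC 1 ⟨zero_le_one, le_rfl⟩
    have := abs_nonneg (g 1 - g 0); linarith
  set D := (C * Real.Gamma (α+2) * 2^(α+2)
       + |g 0| * Real.exp (2*|γ|+|β|) * 4 * Real.Gamma (α+3)
       + |g 0| * Real.exp (2*|γ|+|β|) * (2*|γ|+|β|) * Real.Gamma (α+2)
       + |g 0| * 2 * (max 1 ((8:ℝ)^(-α)))
           * (((Nat.ceil (α+2)).factorial : ℝ) * 16^(Nat.ceil (α+2)))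
       + |g 0| * Real.Gamma (α+1)) with hDdef
  have hkey : ∀ n : ℕ, 2*K+2 ≤ n →
      |(∫ t in Set.Ioo (0:ℝ) 1,
          t ^ α * (1 - t) ^ ((n : ℝ) + γ) * (1 + t) ^ (β - (n : ℝ)) * g t)
        - (2 * (n : ℝ)) ^ (-α - 1) * g 0 * Real.Gamma (α + 1)|
        ≤ D * (n : ℝ) ^ (-α - 2) := by
    intro n hn
    rw [hDdef]
    exact aux_key α γ β C M hα hγ g hg hgC hM' K hKγ hKβ n hn
  have hD0 : 0 ≤ D := by
    have hΓ1 : (0:ℝ) < Real.Gamma (α+1) := Real.Gamma_pos_of_pos (by linarith)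
    have hΓ2 : (0:ℝ) < Real.Gamma (α+2) := Real.Gamma_pos_of_pos (by linarith)
    have hΓ3 : (0:ℝ) < Real.Gamma (α+3) := Real.Gamma_pos_of_pos (by linarith)
    rw [hDdef]
    have p1 : (0:ℝ) ≤ C * Real.Gamma (α+2) * 2^(α+2) := by positivity
    have p2 : (0:ℝ) ≤ |g 0| * Real.exp (2*|γ|+|β|) * 4 * Real.Gamma (α+3) := by positivity
    have p3 : (0:ℝ) ≤ |g 0| * Real.exp (2*|γ|+|β|) * (2*|γ|+|β|) * Real.Gamma (α+2) := by
      positivity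
    have p4 : (0:ℝ) ≤ |g 0| * 2 * (max 1 ((8:ℝ)^(-α)))
        * (((Nat.ceil (α+2)).factorial : ℝ) * 16^(Nat.ceil (α+2))) := by positivity
    have p5 : (0:ℝ) ≤ |g 0| * Real.Gamma (α+1) := by positivity
    linarith
  clear_value D
  set S := ∑ k ∈ Finset.range (2*K+2),
      |(∫ t in Set.Ioo (0:ℝ) 1,
          t ^ α * (1 - t) ^ ((k : ℝ) + γ) * (1 + t) ^ (β - (k : ℝ)) * g t)
        - (2 * (k : ℝ)) ^ (-α - 1) * g 0 * Real.Gamma (α + 1)|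
        * (((k:ℝ)) ^ (-α - 2))⁻¹ with hSdef
  have hS0 : 0 ≤ S := by
    rw [hSdef]
    apply Finset.sum_nonneg
    intro k _
    have h1 : (0:ℝ) ≤ ((k:ℝ)) ^ (-α - 2) := Real.rpow_nonneg (Nat.cast_nonneg k) _
    positivity
  refine ⟨D + 1 + S, by linarith, ?_⟩
  intro n hn2
  have hnpos : (0:ℝ) < (n:ℝ) := by
    have : (0:ℕ) < n := by omega
    exact_mod_cast this
  have hppos : (0:ℝ) < (n:ℝ) ^ (-α - 2) := Real.rpow_pos_of_pos hnpos _
  rcases le_or_gt (2*K+2) n with hge | hlt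
  · refine le_trans (hkey n hge) ?_
    apply mul_le_mul_of_nonneg_right _ hppos.le
    linarith
  · have hmem : n ∈ Finset.range (2*K+2) := Finset.mem_range.2 hlt
    have hsingle : |(∫ t in Set.Ioo (0:ℝ) 1,
          t ^ α * (1 - t) ^ ((n : ℝ) + γ) * (1 + t) ^ (β - (n : ℝ)) * g t)
        - (2 * (n : ℝ)) ^ (-α - 1) * g 0 * Real.Gamma (α + 1)|
        * (((n:ℝ)) ^ (-α - 2))⁻¹ ≤ S := by
      rw [hSdef]
      apply Finset.single_le_sum (f := fun k : ℕ =>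
        |(∫ t in Set.Ioo (0:ℝ) 1,
          t ^ α * (1 - t) ^ ((k : ℝ) + γ) * (1 + t) ^ (β - (k : ℝ)) * g t)
        - (2 * (k : ℝ)) ^ (-α - 1) * g 0 * Real.Gamma (α + 1)|
        * (((k:ℝ)) ^ (-α - 2))⁻¹) _ hmem
      intro k _
      have h1 : (0:ℝ) ≤ ((k:ℝ)) ^ (-α - 2) := Real.rpow_nonneg (Nat.cast_nonneg k) _
      positivity
    have heq : |(∫ t in Set.Ioo (0:ℝ) 1,
          t ^ α * (1 - t) ^ ((n : ℝ) + γ) * (1 + t) ^ (β - (n : ℝ)) * g t)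
        - (2 * (n : ℝ)) ^ (-α - 1) * g 0 * Real.Gamma (α + 1)|
        = (|(∫ t in Set.Ioo (0:ℝ) 1,
          t ^ α * (1 - t) ^ ((n : ℝ) + γ) * (1 + t) ^ (β - (n : ℝ)) * g t)
        - (2 * (n : ℝ)) ^ (-α - 1) * g 0 * Real.Gamma (α + 1)|
        * (((n:ℝ)) ^ (-α - 2))⁻¹) * ((n:ℝ)) ^ (-α - 2) := by
      field_simp
    rw [heq]
    apply mul_le_mul_of_nonneg_right _ hppos.le
    exact le_trans hsingle (by linarith)
end

section
/- Suppose 0 < a < 1, −1 < b < 0 and c ≥ 0. Then for every n ∈ ℕ, Σ_{i=0}^n (−n)_i (−n−1)_i (c)_i / (i! (−n−a)_i (−n−b−1)_i) ≤ (1+a+b+c)_n / (1+a+b)_n ≤ Σ_{i=0}^n (−n)_i² (c)_i / (i! (−n−a)_i (−n−b)_i). -/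
open Finset

/-- Ascending Pochhammer symbol `(x)_m = ∏_{i=0}^{m-1} (x+i)`. -/
noncomputable def poch (x : ℝ) (m : ℕ) : ℝ := ∏ i ∈ Finset.range m, (x + i)



lemma poch_zero (x : ℝ) : poch x 0 = 1 := by simp [poch]

lemma poch_succ (x : ℝ) (n : ℕ) : poch x (n+1) = poch x n * (x + n) := by
  simp [poch, Finset.prod_range_succ]

lemma poch_succ' (x : ℝ) (n : ℕ) : poch x (n+1) = x * poch (x+1) n := by
  rw [poch, Finset.prod_range_succ', mul_comm]
  have : ∏ j ∈ range n, (x + ((j:ℝ) + 1)) = poch (x+1) n := by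
    apply Finset.prod_congr rfl; intro j _; ring
  push_cast
  rw [this]; simp

lemma poch_add (x : ℝ) (i m : ℕ) : poch x (i+m) = poch x i * poch (x+i) m := by
  rw [poch, poch, poch, Finset.prod_range_add]
  congr 1
  apply Finset.prod_congr rfl; intro j _; push_cast; ring

lemma poch_nonneg {x : ℝ} (hx : 0 ≤ x) (m : ℕ) : 0 ≤ poch x m := by
  apply Finset.prod_nonneg; intro j _; positivity

lemma poch_neg (y : ℝ) (i : ℕ) : poch (-y) i = (-1)^i * ∏ j ∈ range i, (y - j) := by
  rw [poch]
  have : ∀ j ∈ range i, -y + (j:ℝ) = (-1) * (y - j) := by intro j _; ring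
  rw [Finset.prod_congr rfl this, Finset.prod_mul_distrib, Finset.prod_const]; simp

lemma prod_reflect (y : ℝ) (n : ℕ) : ∏ j ∈ range n, (y - j) = poch (y - n + 1) n := by
  rw [poch, ← Finset.prod_range_reflect]
  apply Finset.prod_congr rfl
  intro j hj
  rw [Finset.mem_range] at hj
  have : ((n - 1 - j : ℕ) : ℝ) = (n : ℝ) - 1 - j := by
    rw [Nat.cast_sub (by omega), Nat.cast_sub (by omega)]
    simp
  rw [this]; ring
lemma vand (n : ℕ) : ∀ c d : ℝ,
    ∑ i ∈ range (n+1), (-1:ℝ)^i * (n.choose i) * poch c i * poch (d+i) (n-i) = poch (d-c) n := by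
  induction n with
  | zero => intro c d; simp [poch]
  | succ n ih =>
    intro c d
    set g : ℕ → ℝ := fun i => (-1:ℝ)^i * ((n.choose i : ℕ):ℝ) * poch c i * poch (d+i) (n+1-i) with hg
    have key : ∀ i ∈ range (n+1),
        (-1:ℝ)^(i+1) * (((n+1).choose (i+1) : ℕ):ℝ) * poch c (i+1) * poch (d+((i+1:ℕ):ℝ)) (n+1-(i+1))
        = (-c) * ((-1)^i * ((n.choose i : ℕ):ℝ) * poch (c+1) i * poch ((d+1)+i) (n-i)) + g (i+1) := by
      intro i hi
      simp only [hg]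
      rw [Nat.choose_succ_succ, Nat.succ_sub_succ]
      push_cast
      rw [poch_succ' c i]
      have hcast : d + ((i:ℝ)+1) = (d+1) + i := by ring
      rw [hcast]
      ring
    have h1 : ∑ i ∈ range (n+1), (-c) * ((-1:ℝ)^i * ((n.choose i : ℕ):ℝ) * poch (c+1) i * poch ((d+1)+i) (n-i)) = (-c) * poch (d-c) n := by
      have h := ih (c+1) (d+1)
      rw [show (d+1)-(c+1) = d - c by ring] at h
      rw [← Finset.mul_sum, h]
    have h3 : ∑ i ∈ range (n+1), g (i+1) = (d+(n:ℝ)) * poch (d-c) n - poch d (n+1) := by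
      have e1 : ∑ i ∈ range (n+2), g i = (∑ i ∈ range (n+1), g (i+1)) + g 0 :=
        Finset.sum_range_succ' g (n+1)
      have e2 : ∑ i ∈ range (n+2), g i = ∑ i ∈ range (n+1), g i + g (n+1) :=
        Finset.sum_range_succ g (n+1)
      have e3 : g (n+1) = 0 := by simp [hg]
      have e4 : g 0 = poch d (n+1) := by simp [hg, poch_zero]
      have e5 : ∑ i ∈ range (n+1), g i = (d+(n:ℝ)) * poch (d-c) n := by
        have hcong : ∀ i ∈ range (n+1), g i
            = ((-1:ℝ)^i * ((n.choose i : ℕ):ℝ) * poch c i * poch (d+i) (n-i)) * (d+(n:ℝ)) := by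
          intro i hi
          rw [Finset.mem_range] at hi
          have hi' : i ≤ n := Nat.lt_succ_iff.mp hi
          have hsub : n + 1 - i = (n - i) + 1 := by omega
          simp only [hg]
          rw [hsub, poch_succ]
          have hc2 : d + (i:ℝ) + ((n - i : ℕ):ℝ) = d + n := by
            rw [Nat.cast_sub hi']; ring
          rw [hc2]; ring
        rw [Finset.sum_congr rfl hcong, ← Finset.sum_mul, ih c d]; ring
      rw [e1, e3, e4] at e2
      rw [e5] at e2
      linarith
    rw [Finset.sum_range_succ']
    rw [Finset.sum_congr rfl key, Finset.sum_add_distrib, h1, h3]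
    simp only [pow_zero, Nat.choose_zero_right, Nat.cast_one, Nat.cast_zero, add_zero, Nat.sub_zero, poch_zero, one_mul, mul_one]
    rw [poch_succ (d-c) n]
    ring
lemma desc_fact (n : ℕ) : ∀ i, i ≤ n → ∏ j ∈ range i, ((n:ℝ) - j) = (n.choose i) * i.factorial := by
  intro i
  induction i with
  | zero => simp
  | succ i ih =>
    intro hi
    have hi' : i ≤ n := by omega
    rw [Finset.prod_range_succ, ih hi']
    have h := Nat.choose_succ_right_eq n i
    have hcast : ((n.choose (i+1) : ℕ):ℝ) * ((i:ℝ)+1) = (n.choose i : ℝ) * ((n:ℝ) - i) := by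
      have h2 := congrArg (Nat.cast : ℕ → ℝ) h
      push_cast [Nat.cast_sub hi'] at h2
      linarith
    have hfac : ((i+1).factorial : ℝ) = ((i:ℝ)+1) * (i.factorial : ℝ) := by
      rw [Nat.factorial_succ]; push_cast; ring
    rw [hfac]
    nlinarith [hcast]

lemma vand_div (c d : ℝ) (n : ℕ) (hd : ∀ j : ℕ, j < n → d + j ≠ 0) :
    ∑ i ∈ range (n+1), poch (-(n:ℝ)) i * poch c i / ((i.factorial : ℝ) * poch d i)
      = poch (d-c) n / poch d n := by
  rw [← vand n c d, Finset.sum_div]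
  apply Finset.sum_congr rfl
  intro i hi
  rw [Finset.mem_range] at hi
  have hi' : i ≤ n := by omega
  have hsplit : poch d n = poch d i * poch (d+i) (n-i) := by
    rw [← poch_add]; congr 1; omega
  have hpdi : poch d i ≠ 0 := by
    apply Finset.prod_ne_zero_iff.mpr
    intro j hj
    exact hd j (lt_of_lt_of_le (Finset.mem_range.mp hj) hi')
  have hpdni : poch (d+(i:ℝ)) (n-i) ≠ 0 := by
    apply Finset.prod_ne_zero_iff.mpr
    intro j hj
    rw [Finset.mem_range] at hj
    have : d + (i:ℝ) + (j:ℝ) = d + ((i+j : ℕ):ℝ) := by push_cast; ring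
    rw [this]
    exact hd (i+j) (by omega)
  have hfac : (i.factorial : ℝ) ≠ 0 := by positivity
  rw [poch_neg ((n:ℝ)) i, desc_fact n i hi', hsplit]
  field_simp

lemma frac_le (i : ℕ) (f g f' g' : ℕ → ℝ)
    (hg : ∀ j ∈ range i, 0 < g j) (hg' : ∀ j ∈ range i, 0 < g' j)
    (hf : ∀ j ∈ range i, 0 ≤ f j)
    (hkey : ∀ j ∈ range i, f j * g' j ≤ f' j * g j) :
    (∏ j ∈ range i, f j) / (∏ j ∈ range i, g j)
      ≤ (∏ j ∈ range i, f' j) / (∏ j ∈ range i, g' j) := by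
  rw [div_le_div_iff₀ (Finset.prod_pos hg) (Finset.prod_pos hg')]
  rw [← Finset.prod_mul_distrib, ← Finset.prod_mul_distrib]
  apply Finset.prod_le_prod
  · intro j hj; exact mul_nonneg (hf j hj) (le_of_lt (hg' j hj))
  · exact hkey
/-- For 0 < a < 1, −1 < b < 0, c ≥ 0 and every n ∈ ℕ,
₃F₂(−n,−n−1,c;−n−a,−n−b−1;1) ≤ (1+a+b+c)_n/(1+a+b)_n ≤ ₃F₂(−n,−n,c;−n−a,−n−b;1). -/
theorem statement3 (a b c : ℝ) (ha0 : 0 < a) (ha1 : a < 1) (hb0 : -1 < b) (hb1 : b < 0)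
    (hc : 0 ≤ c) (n : ℕ) :
    (∑ i ∈ Finset.range (n + 1),
        poch (-(n:ℝ)) i * poch (-(n:ℝ) - 1) i * poch c i /
          ((i.factorial : ℝ) * poch (-(n:ℝ) - a) i * poch (-(n:ℝ) - b - 1) i))
      ≤ poch (1 + a + b + c) n / poch (1 + a + b) n
    ∧ poch (1 + a + b + c) n / poch (1 + a + b) n
      ≤ ∑ i ∈ Finset.range (n + 1),
          (poch (-(n:ℝ)) i) ^ 2 * poch c i /
            ((i.factorial : ℝ) * poch (-(n:ℝ) - a) i * poch (-(n:ℝ) - b) i) := by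
  set P : ℕ → ℝ := fun i => ∏ j ∈ range i, ((n:ℝ) - j) with hP
  set P1 : ℕ → ℝ := fun i => ∏ j ∈ range i, ((n:ℝ) + 1 - j) with hP1
  set A : ℕ → ℝ := fun i => ∏ j ∈ range i, ((n:ℝ) + a - j) with hA
  set B : ℕ → ℝ := fun i => ∏ j ∈ range i, ((n:ℝ) + b - j) with hB
  set AB : ℕ → ℝ := fun i => ∏ j ∈ range i, ((n:ℝ) + a + b - j) with hAB
  set B1 : ℕ → ℝ := fun i => ∏ j ∈ range i, ((n:ℝ) + b + 1 - j) with hB1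
  have hbound : ∀ i, i ≤ n → ∀ j ∈ range i, (j:ℝ) + 1 ≤ (n:ℝ) := by
    intro i hi j hj
    rw [mem_range] at hj
    exact_mod_cast Nat.succ_le_of_lt (lt_of_lt_of_le hj hi)
  have hPpos : ∀ i, i ≤ n → 0 < P i := by
    intro i hi; rw [hP]; apply Finset.prod_pos; intro j hj
    have := hbound i hi j hj; linarith
  have hP1pos : ∀ i, i ≤ n → 0 < P1 i := by
    intro i hi; rw [hP1]; apply Finset.prod_pos; intro j hj
    have := hbound i hi j hj; linarith
  have hApos : ∀ i, i ≤ n → 0 < A i := by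
    intro i hi; rw [hA]; apply Finset.prod_pos; intro j hj
    have := hbound i hi j hj; linarith
  have hBpos : ∀ i, i ≤ n → 0 < B i := by
    intro i hi; rw [hB]; apply Finset.prod_pos; intro j hj
    have := hbound i hi j hj; linarith
  have hABpos : ∀ i, i ≤ n → 0 < AB i := by
    intro i hi; rw [hAB]; apply Finset.prod_pos; intro j hj
    have := hbound i hi j hj; linarith
  have hB1pos : ∀ i, i ≤ n → 0 < B1 i := by
    intro i hi; rw [hB1]; apply Finset.prod_pos; intro j hj
    have := hbound i hi j hj; linarith
  have hs : ∀ i : ℕ, (-1:ℝ)^i * (-1:ℝ)^i = 1 := by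
    intro i; rw [← pow_add, ← two_mul, pow_mul]; norm_num
  have hsne : ∀ i : ℕ, ((-1:ℝ)^i) ≠ 0 := by
    intro i; apply pow_ne_zero; norm_num
  have hfacpos : ∀ i : ℕ, (0:ℝ) < (i.factorial : ℝ) := by
    intro i; exact_mod_cast i.factorial_pos
  -- sign-extraction equalities
  have e0 : ∀ i : ℕ, poch (-(n:ℝ)) i = (-1)^i * P i := by
    intro i; rw [hP]; exact poch_neg _ _
  have e1 : ∀ i : ℕ, poch (-(n:ℝ) - 1) i = (-1)^i * P1 i := by
    intro i; rw [show -(n:ℝ) - 1 = -((n:ℝ)+1) by ring, hP1]; exact poch_neg _ _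
  have e2 : ∀ i : ℕ, poch (-(n:ℝ) - a) i = (-1)^i * A i := by
    intro i; rw [show -(n:ℝ) - a = -((n:ℝ)+a) by ring, hA]; exact poch_neg _ _
  have e3 : ∀ i : ℕ, poch (-(n:ℝ) - b) i = (-1)^i * B i := by
    intro i; rw [show -(n:ℝ) - b = -((n:ℝ)+b) by ring, hB]; exact poch_neg _ _
  have e4 : ∀ i : ℕ, poch (-(n:ℝ) - a - b) i = (-1)^i * AB i := by
    intro i; rw [show -(n:ℝ) - a - b = -((n:ℝ)+a+b) by ring, hAB]; exact poch_neg _ _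
  have e5 : ∀ i : ℕ, poch (-(n:ℝ) - b - 1) i = (-1)^i * B1 i := by
    intro i; rw [show -(n:ℝ) - b - 1 = -((n:ℝ)+b+1) by ring, hB1]; exact poch_neg _ _
  -- conversion of the three kinds of terms
  have hLOWeq : ∀ i ∈ range (n+1),
      poch (-(n:ℝ)) i * poch (-(n:ℝ) - 1) i * poch c i /
          ((i.factorial : ℝ) * poch (-(n:ℝ) - a) i * poch (-(n:ℝ) - b - 1) i)
        = P i * P1 i * poch c i / ((i.factorial : ℝ) * A i * B1 i) := by
    intro i _
    rw [e0 i, e1 i, e2 i, e5 i,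
      show ((-1:ℝ)^i * P i) * ((-1:ℝ)^i * P1 i) * poch c i
        = (P i * P1 i * poch c i) * ((-1:ℝ)^i * (-1:ℝ)^i) from by ring,
      show ((i.factorial : ℝ)) * ((-1:ℝ)^i * A i) * ((-1:ℝ)^i * B1 i)
        = ((i.factorial : ℝ) * A i * B1 i) * ((-1:ℝ)^i * (-1:ℝ)^i) from by ring,
      hs i, mul_one, mul_one]
  have hUPeq : ∀ i ∈ range (n+1),
      (poch (-(n:ℝ)) i) ^ 2 * poch c i /
          ((i.factorial : ℝ) * poch (-(n:ℝ) - a) i * poch (-(n:ℝ) - b) i)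
        = P i * P i * poch c i / ((i.factorial : ℝ) * A i * B i) := by
    intro i _
    rw [e0 i, e2 i, e3 i,
      show ((-1:ℝ)^i * P i) ^ 2 * poch c i
        = (P i * P i * poch c i) * ((-1:ℝ)^i * (-1:ℝ)^i) from by ring,
      show ((i.factorial : ℝ)) * ((-1:ℝ)^i * A i) * ((-1:ℝ)^i * B i)
        = ((i.factorial : ℝ) * A i * B i) * ((-1:ℝ)^i * (-1:ℝ)^i) from by ring,
      hs i, mul_one, mul_one]
  have hMIDeq : ∀ i ∈ range (n+1),
      poch (-(n:ℝ)) i * poch c i / ((i.factorial : ℝ) * poch (-(n:ℝ) - a - b) i)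
        = P i * poch c i / ((i.factorial : ℝ) * AB i) := by
    intro i _
    rw [e0 i, e4 i,
      show ((-1:ℝ)^i * P i) * poch c i = (P i * poch c i) * ((-1:ℝ)^i) from by ring,
      show ((i.factorial : ℝ)) * ((-1:ℝ)^i * AB i)
        = ((i.factorial : ℝ) * AB i) * ((-1:ℝ)^i) from by ring,
      mul_div_mul_right _ _ (hsne i)]
  -- the middle quantity as a sum
  have hdne : ∀ j : ℕ, j < n → (-(n:ℝ) - a - b) + j ≠ 0 := by
    intro j hj
    have hjn : (j:ℝ) + 1 ≤ (n:ℝ) := by exact_mod_cast Nat.succ_le_of_lt hj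
    have : (-(n:ℝ) - a - b) + j < 0 := by linarith
    linarith
  have hvd := vand_div c (-(n:ℝ) - a - b) n hdne
  have hRnum : poch (-(n:ℝ) - a - b - c) n = (-1)^n * poch (1+a+b+c) n := by
    rw [show -(n:ℝ) - a - b - c = -((n:ℝ) + a + b + c) by ring, poch_neg, prod_reflect,
      show (n:ℝ) + a + b + c - (n:ℝ) + 1 = 1+a+b+c by ring]
  have hRden : poch (-(n:ℝ) - a - b) n = (-1)^n * poch (1+a+b) n := by
    rw [show -(n:ℝ) - a - b = -((n:ℝ) + a + b) by ring, poch_neg, prod_reflect,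
      show (n:ℝ) + a + b - (n:ℝ) + 1 = 1+a+b by ring]
  have hMID : poch (1 + a + b + c) n / poch (1 + a + b) n
      = ∑ i ∈ range (n+1), P i * poch c i / ((i.factorial : ℝ) * AB i) := by
    rw [← Finset.sum_congr rfl hMIDeq, hvd, hRnum, hRden,
      mul_div_mul_left _ _ (hsne n)]
  -- the termwise inequalities
  have hLM : ∀ i ∈ range (n+1),
      P i * P1 i * poch c i / ((i.factorial : ℝ) * A i * B1 i)
        ≤ P i * poch c i / ((i.factorial : ℝ) * AB i) := by
    intro i hi
    rw [mem_range] at hi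
    have hi' : i ≤ n := by omega
    have hw : 0 ≤ P i * poch c i / ((i.factorial : ℝ) * A i) := by
      apply div_nonneg
      · exact mul_nonneg (le_of_lt (hPpos i hi')) (poch_nonneg hc i)
      · exact mul_nonneg (le_of_lt (hfacpos i)) (le_of_lt (hApos i hi'))
    have hfr : P1 i / B1 i ≤ A i / AB i := by
      rw [hP1, hB1, hA, hAB]
      apply frac_le
      · intro j hj; have := hbound i hi' j hj; linarith
      · intro j hj; have := hbound i hi' j hj; linarith
      · intro j hj; have := hbound i hi' j hj; linarith
      · intro j hj
        have hba : (0:ℝ) < b * (a - 1) := mul_pos_of_neg_of_neg hb1 (by linarith)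
        nlinarith [hbound i hi' j hj]
    calc P i * P1 i * poch c i / ((i.factorial : ℝ) * A i * B1 i)
        = (P i * poch c i / ((i.factorial : ℝ) * A i)) * (P1 i / B1 i) := by
          rw [div_mul_div_comm]; congr 1 <;> ring
      _ ≤ (P i * poch c i / ((i.factorial : ℝ) * A i)) * (A i / AB i) :=
          mul_le_mul_of_nonneg_left hfr hw
      _ = P i * poch c i / ((i.factorial : ℝ) * AB i) := by
          rw [div_mul_div_comm,
            show P i * poch c i * A i = (P i * poch c i) * A i from by ring,
            show (i.factorial : ℝ) * A i * (AB i) = ((i.factorial : ℝ) * AB i) * A i from by ring,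
            mul_div_mul_right _ _ (ne_of_gt (hApos i hi'))]
  have hMU : ∀ i ∈ range (n+1),
      P i * poch c i / ((i.factorial : ℝ) * AB i)
        ≤ P i * P i * poch c i / ((i.factorial : ℝ) * A i * B i) := by
    intro i hi
    rw [mem_range] at hi
    have hi' : i ≤ n := by omega
    have hw : 0 ≤ P i * poch c i / ((i.factorial : ℝ) * A i) := by
      apply div_nonneg
      · exact mul_nonneg (le_of_lt (hPpos i hi')) (poch_nonneg hc i)
      · exact mul_nonneg (le_of_lt (hfacpos i)) (le_of_lt (hApos i hi'))
    have hfr : A i / AB i ≤ P i / B i := by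
      rw [hP, hB, hA, hAB]
      apply frac_le
      · intro j hj; have := hbound i hi' j hj; linarith
      · intro j hj; have := hbound i hi' j hj; linarith
      · intro j hj; have := hbound i hi' j hj; linarith
      · intro j hj
        have hba : (0:ℝ) < a * (-b) := mul_pos ha0 (by linarith)
        nlinarith [hbound i hi' j hj]
    calc P i * poch c i / ((i.factorial : ℝ) * AB i)
        = (P i * poch c i / ((i.factorial : ℝ) * A i)) * (A i / AB i) := by
          rw [div_mul_div_comm,
            show P i * poch c i * A i = (P i * poch c i) * A i from by ring,
            show (i.factorial : ℝ) * A i * (AB i) = ((i.factorial : ℝ) * AB i) * A i from by ring,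
            mul_div_mul_right _ _ (ne_of_gt (hApos i hi'))]
      _ ≤ (P i * poch c i / ((i.factorial : ℝ) * A i)) * (P i / B i) :=
          mul_le_mul_of_nonneg_left hfr hw
      _ = P i * P i * poch c i / ((i.factorial : ℝ) * A i * B i) := by
          rw [div_mul_div_comm]; congr 1 <;> ring
  constructor
  · calc (∑ i ∈ Finset.range (n + 1),
        poch (-(n:ℝ)) i * poch (-(n:ℝ) - 1) i * poch c i /
          ((i.factorial : ℝ) * poch (-(n:ℝ) - a) i * poch (-(n:ℝ) - b - 1) i))
        = ∑ i ∈ range (n+1), P i * P1 i * poch c i / ((i.factorial : ℝ) * A i * B1 i) :=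
          Finset.sum_congr rfl hLOWeq
      _ ≤ ∑ i ∈ range (n+1), P i * poch c i / ((i.factorial : ℝ) * AB i) :=
          Finset.sum_le_sum hLM
      _ = poch (1 + a + b + c) n / poch (1 + a + b) n := hMID.symm
  · calc poch (1 + a + b + c) n / poch (1 + a + b) n
        = ∑ i ∈ range (n+1), P i * poch c i / ((i.factorial : ℝ) * AB i) := hMID
      _ ≤ ∑ i ∈ range (n+1), P i * P i * poch c i / ((i.factorial : ℝ) * A i * B i) :=
          Finset.sum_le_sum hMU
      _ = ∑ i ∈ Finset.range (n + 1),
          (poch (-(n:ℝ)) i) ^ 2 * poch c i /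
            ((i.factorial : ℝ) * poch (-(n:ℝ) - a) i * poch (-(n:ℝ) - b) i) :=
          (Finset.sum_congr rfl hUPeq).symm
end
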